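/- arXiv:math/0405364 — 3 statements merged into one kernel-verified Lean document; each statement's English description precedes it below -/
import Mathlib

section
/- Fix a point q0 ∈ RP^3. There is a homeomorphism Φ from the space {(x,y) ∈ RP^3 × RP^3 : x ≠ y} (the complement of the diagonal) onto RP^3 × (RP^3 \ {q0}) such that the first coordinate of Φ(x,y) equals x for every pair (x,y); in other words, the projection (x,y) ↦ x from the complement of the diagonal to RP^3 is a trivial fiber bundle with fiber RP^3 minus a point. -/
set_option synthInstance.maxHeartbeats 1000000
set_option maxHeartbeats 2000000

noncomputable section

/-- The unit sphere in `ℝ^n`. -/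
abbrev Sph (n : ℕ) := Metric.sphere (0 : EuclideanSpace ℝ (Fin n)) 1

/-- The antipodal equivalence relation on the unit sphere in `ℝ^n`. -/
def antipodalSetoid (n : ℕ) : Setoid (Sph n) where
  r x y := (x : EuclideanSpace ℝ (Fin n)) = y ∨ (x : EuclideanSpace ℝ (Fin n)) = -y
  iseqv := by
    constructor
    · intro x; exact Or.inl rfl
    · rintro x y (h | h)
      · exact Or.inl h.symm
      · exact Or.inr (by rw [h, neg_neg])
    · rintro x y z (h1 | h1) (h2 | h2)
      · exact Or.inl (by rw [h1, h2])
      · exact Or.inr (by rw [h1, h2])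
      · exact Or.inr (by rw [h1, h2])
      · exact Or.inl (by rw [h1, h2, neg_neg])

/-- Real projective `n`-space, as the quotient of the unit sphere in `ℝ^{n+1}`
by the antipodal involution, with the quotient topology. -/
abbrev RP (n : ℕ) := Quotient (antipodalSetoid (n + 1))

namespace RP3Aux

open Quaternion Metric

/-- The unit sphere in the quaternions, a topological group. -/
abbrev S := Metric.sphere (0 : ℍ[ℝ]) 1

/-- The subgroup `{1, -1}` of the unit quaternions. -/
def N : Subgroup S where
  carrier := {1, -1}
  one_mem' := Or.inl rfl
  mul_mem' := by
    rintro x y (rfl | rfl) (rfl | rfl)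
    · exact Or.inl (one_mul 1)
    · exact Or.inr (one_mul (-1))
    · exact Or.inr (mul_one (-1))
    · exact Or.inl (by have h := neg_mul_neg (1 : S) 1; rwa [one_mul] at h)
  inv_mem' := by
    rintro x (rfl | rfl)
    · exact Or.inl inv_one
    · exact Or.inr inv_neg_one

lemma mem_N {x : S} : x ∈ N ↔ x = 1 ∨ x = -1 := Iff.rfl

instance : N.Normal := by
  constructor
  intro n hn g
  rcases mem_N.1 hn with rfl | rfl
  · exact mem_N.2 (Or.inl (by group))
  · refine mem_N.2 (Or.inr ?_)
    rw [mul_neg_one, neg_mul, mul_inv_cancel]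

/-- The quotient group `S ⧸ N`; a topological group homeomorphic to `RP 3`. -/
abbrev G := S ⧸ N

/-- Homeomorphism between quotients induced by a relation-preserving homeomorphism. -/
def quotCongrHomeo {α β : Type*} [TopologicalSpace α] [TopologicalSpace β]
    {s : Setoid α} {t : Setoid β} (e : α ≃ₜ β) (h : ∀ x y, s.r x y ↔ t.r (e x) (e y)) :
    Quotient s ≃ₜ Quotient t where
  toEquiv := Quotient.congr e.toEquiv h
  continuous_toFun :=
    (continuous_quotient_mk'.comp e.continuous).quotient_lift _
  continuous_invFun :=
    (continuous_quotient_mk'.comp e.symm.continuous).quotient_lift _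

/-- Homeomorphism between subtypes induced by a homeomorphism. -/
def homeoSubtype {α β : Type*} [TopologicalSpace α] [TopologicalSpace β] (e : α ≃ₜ β)
    {p : α → Prop} {q : β → Prop} (h : ∀ x, p x ↔ q (e x)) :
    {x // p x} ≃ₜ {y // q y} where
  toEquiv := e.toEquiv.subtypeEquiv h
  continuous_toFun := (e.continuous.comp continuous_subtype_val).subtype_mk _
  continuous_invFun := (e.symm.continuous.comp continuous_subtype_val).subtype_mk _

/-- The homeomorphism between the two unit spheres. -/
def sphereHomeo : Sph 4 ≃ₜ S where
  toFun x := ⟨Quaternion.linearIsometryEquivTuple.symm x, by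
    rw [mem_sphere_zero_iff_norm, LinearIsometryEquiv.norm_map]
    exact mem_sphere_zero_iff_norm.1 x.2⟩
  invFun y := ⟨Quaternion.linearIsometryEquivTuple y, by
    rw [mem_sphere_zero_iff_norm, LinearIsometryEquiv.norm_map]
    exact mem_sphere_zero_iff_norm.1 y.2⟩
  left_inv x := Subtype.ext (Quaternion.linearIsometryEquivTuple.apply_symm_apply _)
  right_inv y := Subtype.ext (Quaternion.linearIsometryEquivTuple.symm_apply_apply _)
  continuous_toFun :=
    (Quaternion.linearIsometryEquivTuple.symm.continuous.comp continuous_subtype_val).subtype_mk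
      fun x => by
        rw [mem_sphere_zero_iff_norm]
        simp only [Function.comp_apply]
        rw [LinearIsometryEquiv.norm_map]
        exact mem_sphere_zero_iff_norm.1 x.2
  continuous_invFun :=
    (Quaternion.linearIsometryEquivTuple.continuous.comp continuous_subtype_val).subtype_mk
      fun y => by
        rw [mem_sphere_zero_iff_norm]
        simp only [Function.comp_apply]
        rw [LinearIsometryEquiv.norm_map]
        exact mem_sphere_zero_iff_norm.1 y.2

@[simp] lemma coe_sphereHomeo (x : Sph 4) :
    (sphereHomeo x : ℍ[ℝ]) = Quaternion.linearIsometryEquivTuple.symm (x : EuclideanSpace ℝ (Fin 4)) :=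
  rfl

lemma sphereHomeo_rel (x y : Sph 4) :
    (antipodalSetoid 4).r x y ↔
      (QuotientGroup.leftRel N).r (sphereHomeo x) (sphereHomeo y) := by
  show ((x : EuclideanSpace ℝ (Fin 4)) = y ∨ (x : EuclideanSpace ℝ (Fin 4)) = -y) ↔ _
  rw [show ((QuotientGroup.leftRel N).r (sphereHomeo x) (sphereHomeo y)) ↔
      (sphereHomeo x)⁻¹ * sphereHomeo y ∈ N from QuotientGroup.leftRel_apply, mem_N,
    inv_mul_eq_one, inv_mul_eq_iff_eq_mul, mul_neg_one, Subtype.ext_iff, Subtype.ext_iff,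
    coe_neg_sphere]
  simp only [coe_sphereHomeo, ← map_neg,
    Quaternion.linearIsometryEquivTuple.symm.injective.eq_iff]
  constructor
  · rintro (h | h)
    · exact Or.inl h
    · exact Or.inr (by rw [h, neg_neg])
  · rintro (h | h)
    · exact Or.inl h
    · exact Or.inr (by rw [h, neg_neg])

/-- The homeomorphism `RP 3 ≃ₜ G`. -/
def rpHomeo : RP 3 ≃ₜ G :=
  quotCongrHomeo sphereHomeo sphereHomeo_rel

lemma key (q1 x y : G) : q1 * x⁻¹ * y = q1 ↔ y = x := by
  rw [mul_assoc, mul_eq_left, inv_mul_eq_one, eq_comm]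

lemma key' (q1 x z : G) : x * q1⁻¹ * z = x ↔ z = q1 := by
  rw [mul_assoc, mul_eq_left, inv_mul_eq_one, eq_comm]

/-- The core trivialization over `G`. -/
def coreHomeo (q1 : G) : {p : G × G // p.1 ≠ p.2} ≃ₜ G × {y : G // y ≠ q1} where
  toFun p := (p.val.1, ⟨q1 * p.val.1⁻¹ * p.val.2, fun h => p.2 ((key _ _ _ |>.1 h).symm)⟩)
  invFun q := ⟨(q.1, q.1 * q1⁻¹ * q.2.val), fun h => q.2.2 ((key' _ _ _ ).1 h.symm)⟩
  left_inv p := Subtype.ext (Prod.ext rfl (by simp only; group))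
  right_inv q := Prod.ext rfl (Subtype.ext (by simp only; group))
  continuous_toFun := by
    apply Continuous.prodMk
    · exact continuous_fst.comp continuous_subtype_val
    · refine Continuous.subtype_mk ?_ _
      exact ((continuous_const.mul ((continuous_fst.comp continuous_subtype_val).inv)).mul
        (continuous_snd.comp continuous_subtype_val))
  continuous_invFun := by
    refine Continuous.subtype_mk ?_ _
    apply Continuous.prodMk continuous_fst
    exact (continuous_fst.mul continuous_const).mul
      (continuous_subtype_val.comp continuous_snd)

end RP3Aux

/-- Fix `q0 ∈ RP^3`. There is a homeomorphism from the complement of the diagonal in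
`RP^3 × RP^3` onto `RP^3 × (RP^3 \ {q0})` commuting with the projection to the first
factor; i.e. the projection `(x,y) ↦ x` is a trivial bundle with fiber `RP^3` minus
a point. -/
theorem rp3_diagonal_complement_trivial_bundle (q0 : RP 3) :
    ∃ Φ : {p : RP 3 × RP 3 // p.1 ≠ p.2} ≃ₜ (RP 3) × {y : RP 3 // y ≠ q0},
      ∀ p : {p : RP 3 × RP 3 // p.1 ≠ p.2}, (Φ p).1 = (p : RP 3 × RP 3).1 := by
  classical
  let e := RP3Aux.rpHomeo
  have hA : ∀ x : RP 3 × RP 3, x.1 ≠ x.2 ↔ ((e.prodCongr e) x).1 ≠ ((e.prodCongr e) x).2 :=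
    fun x => not_congr ⟨fun h => congrArg e h, fun h => e.injective h⟩
  have hB : ∀ y : RP3Aux.G, y ≠ e q0 ↔ e.symm y ≠ q0 :=
    fun y => not_congr ⟨fun h => by rw [h, e.symm_apply_apply],
      fun h => by rw [← h, e.apply_symm_apply]⟩
  refine ⟨((RP3Aux.homeoSubtype (e.prodCongr e) hA).trans (RP3Aux.coreHomeo (e q0))).trans
    (e.symm.prodCongr (RP3Aux.homeoSubtype e.symm hB)), ?_⟩
  intro p
  exact e.symm_apply_apply _

end
end

section
/- The complement of the diagonal (RP^3 × RP^3) \ Δ is homotopy equivalent to the product RP^3 × RP^2. -/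
noncomputable section

namespace RPWork

/-- negation on the sphere -/
def negS {n : ℕ} (v : Sph n) : Sph n :=
  ⟨-(v : EuclideanSpace ℝ (Fin n)), by
    have := v.2
    simp only [mem_sphere_iff_norm, sub_zero, norm_neg] at *
    exact this⟩

@[simp] lemma coe_negS {n : ℕ} (v : Sph n) :
    ((negS v : Sph n) : EuclideanSpace ℝ (Fin n)) = -(v : EuclideanSpace ℝ (Fin n)) := rfl

lemma continuous_negS {n : ℕ} : Continuous (negS (n := n)) :=
  Continuous.subtype_mk (continuous_subtype_val.neg) _

lemma rel_iff' {n : ℕ} (a b : Sph n) : (antipodalSetoid n).r a b ↔ a = b ∨ a = negS b := by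
  constructor
  · rintro (h | h)
    · exact Or.inl (Subtype.ext h)
    · exact Or.inr (Subtype.ext h)
  · rintro (rfl | rfl)
    · exact Or.inl rfl
    · exact Or.inr rfl

/-- projection to the quotient -/
def pr (n : ℕ) : Sph n → Quotient (antipodalSetoid n) := Quotient.mk _

lemma pr_surjective (n : ℕ) : Function.Surjective (pr n) := Quotient.mk_surjective

lemma continuous_pr (n : ℕ) : Continuous (pr n) := continuous_quotient_mk'

lemma pr_eq_iff {n : ℕ} (a b : Sph n) : pr n a = pr n b ↔ a = b ∨ a = negS b := by
  rw [show pr n a = Quotient.mk _ a from rfl, show pr n b = Quotient.mk _ b from rfl,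
    Quotient.eq]
  exact rel_iff' a b

lemma isOpenMap_pr (n : ℕ) : IsOpenMap (pr n) := by
  intro U hU
  have key : pr n ⁻¹' (pr n '' U) = U ∪ negS ⁻¹' U := by
    ext x
    simp only [Set.mem_preimage, Set.mem_image, Set.mem_union]
    constructor
    · rintro ⟨a, ha, hax⟩
      rcases (pr_eq_iff a x).mp hax with rfl | rfl
      · exact Or.inl ha
      · exact Or.inr ha
    · rintro (h | h)
      · exact ⟨x, h, rfl⟩
      · exact ⟨negS x, h, (pr_eq_iff _ _).mpr (Or.inr (by apply Subtype.ext; simp))⟩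
  have : IsOpen (pr n ⁻¹' (pr n '' U)) := by
    rw [key]
    exact hU.union (hU.preimage continuous_negS)
  exact isOpen_coinduced.mpr this

lemma isOpenQuotientMap_pr (n : ℕ) : IsOpenQuotientMap (pr n) :=
  ⟨pr_surjective n, continuous_pr n, isOpenMap_pr n⟩


/-! ### Quaternion model for `Sph 4` -/

open Quaternion in
def eq4 : Quaternion ℝ ≃ₗᵢ[ℝ] EuclideanSpace ℝ (Fin 4) := Quaternion.linearIsometryEquivTuple

def qv (a : Sph 4) : Quaternion ℝ := eq4.symm (a : EuclideanSpace ℝ (Fin 4))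

lemma norm_qv (a : Sph 4) : ‖qv a‖ = 1 := by
  have := a.2
  simp only [mem_sphere_iff_norm, sub_zero] at this
  simpa [qv] using this

def mkq (x : Quaternion ℝ) (h : ‖x‖ = 1) : Sph 4 :=
  ⟨eq4 x, by simpa [mem_sphere_iff_norm] using h⟩

@[simp] lemma qv_mkq (x : Quaternion ℝ) (h : ‖x‖ = 1) : qv (mkq x h) = x := by
  simp [qv, mkq]

lemma mkq_eq_mkq {x y : Quaternion ℝ} {hx hy} : mkq x hx = mkq y hy ↔ x = y := by
  rw [Subtype.ext_iff]
  exact ⟨fun h => eq4.injective h, fun h => by rw [mkq, mkq]; simp [h]⟩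

lemma negS_mkq (x : Quaternion ℝ) (h : ‖x‖ = 1) :
    negS (mkq x h) = mkq (-x) (by simpa using h) := by
  apply Subtype.ext
  simp [mkq, negS]

lemma qv_negS (a : Sph 4) : qv (negS a) = -qv a := by
  simp [qv, negS]

lemma mkq_qv (a : Sph 4) : mkq (qv a) (norm_qv a) = a := by
  apply Subtype.ext
  simp [mkq, qv]

lemma norm_mul_one {x y : Quaternion ℝ} (hx : ‖x‖ = 1) (hy : ‖y‖ = 1) : ‖x * y‖ = 1 := by
  rw [norm_mul, hx, hy, mul_one]

lemma unit_mul_star {a : Quaternion ℝ} (ha : ‖a‖ = 1) : a * star a = 1 := by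
  rw [Quaternion.self_mul_star, Quaternion.normSq_eq_norm_mul_self, ha, one_mul]
  exact Quaternion.coe_one

lemma unit_star_mul {a : Quaternion ℝ} (ha : ‖a‖ = 1) : star a * a = 1 := by
  rw [Quaternion.star_mul_self, Quaternion.normSq_eq_norm_mul_self, ha, one_mul]
  exact Quaternion.coe_one

def pmulS (a b : Sph 4) : Sph 4 := mkq (qv a * qv b) (norm_mul_one (norm_qv a) (norm_qv b))

def dS (a b : Sph 4) : Sph 4 :=
  mkq (star (qv a) * qv b) (norm_mul_one (by rw [norm_star]; exact norm_qv a) (norm_qv b))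

lemma pmulS_negL (a b : Sph 4) : pmulS (negS a) b = negS (pmulS a b) := by
  rw [pmulS, pmulS, negS_mkq]
  exact mkq_eq_mkq.mpr (by rw [qv_negS, neg_mul])

lemma pmulS_negR (a b : Sph 4) : pmulS a (negS b) = negS (pmulS a b) := by
  rw [pmulS, pmulS, negS_mkq]
  exact mkq_eq_mkq.mpr (by rw [qv_negS, mul_neg])

lemma dS_negL (a b : Sph 4) : dS (negS a) b = negS (dS a b) := by
  rw [dS, dS, negS_mkq]
  exact mkq_eq_mkq.mpr (by rw [qv_negS, star_neg, neg_mul])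

lemma dS_negR (a b : Sph 4) : dS a (negS b) = negS (dS a b) := by
  rw [dS, dS, negS_mkq]
  exact mkq_eq_mkq.mpr (by rw [qv_negS, mul_neg])

def oneS : Sph 4 := mkq 1 norm_one

/-- multiplication on `RP 3` -/
def pmul : RP 3 → RP 3 → RP 3 :=
  Quotient.map₂ pmulS (by
    intro a a' ha b b' hb
    rcases (rel_iff' a a').mp ha with rfl | rfl <;>
      rcases (rel_iff' b b').mp hb with rfl | rfl
    · exact (rel_iff' _ _).mpr (Or.inl rfl)
    · exact (rel_iff' _ _).mpr (Or.inr (by rw [pmulS_negR]))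
    · exact (rel_iff' _ _).mpr (Or.inr (by rw [pmulS_negL]))
    · refine (rel_iff' _ _).mpr (Or.inl ?_)
      rw [pmulS_negL, pmulS_negR]
      apply Subtype.ext; simp)

/-- "division" `x⁻¹ * y` on `RP 3` -/
def pdiv : RP 3 → RP 3 → RP 3 :=
  Quotient.map₂ dS (by
    intro a a' ha b b' hb
    rcases (rel_iff' a a').mp ha with rfl | rfl <;>
      rcases (rel_iff' b b').mp hb with rfl | rfl
    · exact (rel_iff' _ _).mpr (Or.inl rfl)
    · exact (rel_iff' _ _).mpr (Or.inr (by rw [dS_negR]))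
    · exact (rel_iff' _ _).mpr (Or.inr (by rw [dS_negL]))
    · refine (rel_iff' _ _).mpr (Or.inl ?_)
      rw [dS_negL, dS_negR]
      apply Subtype.ext; simp)

def oneP : RP 3 := pr 4 oneS

@[simp] lemma pmul_pr (a b : Sph 4) : pmul (pr 4 a) (pr 4 b) = pr 4 (pmulS a b) := rfl

@[simp] lemma pdiv_pr (a b : Sph 4) : pdiv (pr 4 a) (pr 4 b) = pr 4 (dS a b) := rfl

lemma star_mul_eq_one_iff {a b : Quaternion ℝ} (ha : ‖a‖ = 1) : star a * b = 1 ↔ b = a := by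
  constructor
  · intro h
    calc b = (a * star a) * b := by rw [unit_mul_star ha, one_mul]
    _ = a * (star a * b) := by rw [mul_assoc]
    _ = a := by rw [h, mul_one]
  · rintro rfl; exact unit_star_mul ha

lemma star_mul_eq_neg_one_iff {a b : Quaternion ℝ} (ha : ‖a‖ = 1) :
    star a * b = -1 ↔ b = -a := by
  constructor
  · intro h
    calc b = (a * star a) * b := by rw [unit_mul_star ha, one_mul]
    _ = a * (star a * b) := by rw [mul_assoc]
    _ = -a := by rw [h, mul_neg_one]
  · rintro rfl
    rw [mul_neg, unit_star_mul ha]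

lemma pdiv_eq_one_iff (x y : RP 3) : pdiv x y = oneP ↔ x = y := by
  induction x using Quotient.ind with | _ a =>
  induction y using Quotient.ind with | _ b =>
  show pdiv (pr 4 a) (pr 4 b) = oneP ↔ pr 4 a = pr 4 b
  rw [pdiv_pr, oneP, pr_eq_iff, pr_eq_iff, dS, oneS, negS_mkq, mkq_eq_mkq, mkq_eq_mkq,
    star_mul_eq_one_iff (norm_qv a), star_mul_eq_neg_one_iff (norm_qv a)]
  constructor
  · rintro (h | h)
    · exact Or.inl (by rw [← mkq_qv a, ← mkq_qv b, mkq_eq_mkq, h])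
    · refine Or.inr ?_
      rw [← mkq_qv a, ← mkq_qv b, negS_mkq, mkq_eq_mkq, h, neg_neg]
  · rintro (rfl | rfl)
    · exact Or.inl rfl
    · exact Or.inr (by rw [qv_negS, neg_neg])

lemma pmul_pdiv (x y : RP 3) : pmul x (pdiv x y) = y := by
  induction x using Quotient.ind with | _ a =>
  induction y using Quotient.ind with | _ b =>
  show pmul (pr 4 a) (pdiv (pr 4 a) (pr 4 b)) = pr 4 b
  rw [pdiv_pr, pmul_pr]
  congr 1
  rw [pmulS, dS, ← mkq_qv b, mkq_eq_mkq]
  rw [qv_mkq, ← mul_assoc, unit_mul_star (norm_qv a), one_mul, qv_mkq]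

lemma pdiv_pmul (x q : RP 3) : pdiv x (pmul x q) = q := by
  induction x using Quotient.ind with | _ a =>
  induction q using Quotient.ind with | _ b =>
  show pdiv (pr 4 a) (pmul (pr 4 a) (pr 4 b)) = pr 4 b
  rw [pmul_pr, pdiv_pr]
  congr 1
  rw [pmulS, dS, ← mkq_qv b, mkq_eq_mkq]
  rw [qv_mkq, ← mul_assoc, unit_star_mul (norm_qv a), one_mul, qv_mkq]

lemma continuous_pmul2 : Continuous (fun p : RP 3 × RP 3 => pmul p.1 p.2) := by
  rw [← ((isOpenQuotientMap_pr 4).prodMap (isOpenQuotientMap_pr 4)).continuous_comp_iff]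
  show Continuous fun p : Sph 4 × Sph 4 => pmul (pr 4 p.1) (pr 4 p.2)
  simp only [pmul_pr]
  refine (continuous_pr 4).comp ?_
  apply Continuous.subtype_mk
  show Continuous fun p : Sph 4 × Sph 4 => eq4 (qv p.1 * qv p.2)
  have hqv : Continuous qv := eq4.symm.continuous.comp continuous_subtype_val
  exact eq4.continuous.comp ((hqv.comp continuous_fst).mul (hqv.comp continuous_snd))

lemma continuous_pdiv2 : Continuous (fun p : RP 3 × RP 3 => pdiv p.1 p.2) := by
  rw [← ((isOpenQuotientMap_pr 4).prodMap (isOpenQuotientMap_pr 4)).continuous_comp_iff]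
  show Continuous fun p : Sph 4 × Sph 4 => pdiv (pr 4 p.1) (pr 4 p.2)
  simp only [pdiv_pr]
  refine (continuous_pr 4).comp ?_
  apply Continuous.subtype_mk
  show Continuous fun p : Sph 4 × Sph 4 => eq4 (star (qv p.1) * qv p.2)
  have hqv : Continuous qv := eq4.symm.continuous.comp continuous_subtype_val
  exact eq4.continuous.comp (((hqv.comp continuous_fst).star).mul (hqv.comp continuous_snd))


/-! ### The homeomorphism `(RP³×RP³) ∖ Δ ≃ₜ RP³ × (RP³ ∖ {1})` -/

def Phi : {p : RP 3 × RP 3 // p.1 ≠ p.2} ≃ₜ (RP 3) × {q : RP 3 // q ≠ oneP} where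
  toFun p := (p.1.1, ⟨pdiv p.1.1 p.1.2, fun h => p.2 ((pdiv_eq_one_iff _ _).mp h)⟩)
  invFun x := ⟨(x.1, pmul x.1 x.2.1), fun h => x.2.2 (by
    have h2 : pdiv x.1 (pmul x.1 x.2.1) = oneP := (pdiv_eq_one_iff _ _).mpr h
    rwa [pdiv_pmul] at h2)⟩
  left_inv p := Subtype.ext (Prod.ext rfl (pmul_pdiv _ _))
  right_inv x := Prod.ext rfl (Subtype.ext (pdiv_pmul _ _))
  continuous_toFun := by
    apply Continuous.prodMk
    · exact continuous_fst.comp continuous_subtype_val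
    · apply Continuous.subtype_mk
      exact continuous_pdiv2.comp continuous_subtype_val
  continuous_invFun := by
    apply Continuous.subtype_mk
    apply Continuous.prodMk continuous_fst
    exact continuous_pmul2.comp
      (continuous_fst.prodMk (continuous_subtype_val.comp continuous_snd))

/-! ### Coordinates -/

def tail4 (x : EuclideanSpace ℝ (Fin 4)) : EuclideanSpace ℝ (Fin 3) :=
  WithLp.toLp 2 (fun i => x i.succ)

def cons0 (w : EuclideanSpace ℝ (Fin 3)) : EuclideanSpace ℝ (Fin 4) :=
  WithLp.toLp 2 (Fin.cons (0 : ℝ) (fun i => w i))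

@[simp] lemma tail4_apply (x : EuclideanSpace ℝ (Fin 4)) (i : Fin 3) :
    tail4 x i = x i.succ := rfl

@[simp] lemma cons0_zero (w : EuclideanSpace ℝ (Fin 3)) : cons0 w 0 = 0 := rfl

@[simp] lemma cons0_succ (w : EuclideanSpace ℝ (Fin 3)) (i : Fin 3) : cons0 w i.succ = w i := by
  simp [cons0]

@[simp] lemma tail4_cons0 (w : EuclideanSpace ℝ (Fin 3)) : tail4 (cons0 w) = w :=
  PiLp.ext fun i => cons0_succ w i

lemma tail4_neg (x : EuclideanSpace ℝ (Fin 4)) : tail4 (-x) = -tail4 x := rfl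

lemma tail4_smul (c : ℝ) (x : EuclideanSpace ℝ (Fin 4)) : tail4 (c • x) = c • tail4 x := rfl

lemma tail4_add (x y : EuclideanSpace ℝ (Fin 4)) : tail4 (x + y) = tail4 x + tail4 y := rfl

lemma cons0_neg (w : EuclideanSpace ℝ (Fin 3)) : cons0 (-w) = -cons0 w := by
  ext i
  refine Fin.cases ?_ (fun j => ?_) i
  · show cons0 (-w) 0 = -(cons0 w 0)
    simp
  · show cons0 (-w) j.succ = -(cons0 w j.succ)
    simp

lemma continuous_tail4 : Continuous tail4 := by
  refine (PiLp.continuous_toLp 2 _).comp (continuous_pi ?_)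
  intro i
  exact (continuous_apply _).comp (PiLp.continuous_ofLp 2 _)

lemma continuous_cons0 : Continuous cons0 := by
  refine (PiLp.continuous_toLp 2 _).comp (continuous_pi ?_)
  intro i
  refine Fin.cases ?_ (fun j => ?_) i
  · simpa using continuous_const
  · simpa [Function.comp_def] using (continuous_apply j).comp (PiLp.continuous_ofLp 2 (fun _ : Fin 3 => ℝ))

lemma norm_cons0 (w : EuclideanSpace ℝ (Fin 3)) : ‖cons0 w‖ = ‖w‖ := by
  rw [EuclideanSpace.norm_eq, EuclideanSpace.norm_eq]
  congr 1
  rw [Fin.sum_univ_succ]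
  simp


lemma oneS_zero : ((oneS : Sph 4) : EuclideanSpace ℝ (Fin 4)) 0 = 1 := by
  show (eq4 1) 0 = 1
  rfl

lemma tail4_oneS : tail4 ((oneS : Sph 4) : EuclideanSpace ℝ (Fin 4)) = 0 := by
  ext j
  show (eq4 1) j.succ = 0
  fin_cases j <;> rfl


lemma norm_sph {n : ℕ} (v : Sph n) : ‖(v : EuclideanSpace ℝ (Fin n))‖ = 1 := by
  have := v.2
  simpa [mem_sphere_iff_norm] using this

lemma eq_one_iff (v : Sph 4) :
    pr 4 v = oneP ↔ tail4 (v : EuclideanSpace ℝ (Fin 4)) = 0 := by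
  constructor
  · intro h
    rcases (pr_eq_iff v oneS).mp h with rfl | rfl
    · exact tail4_oneS
    · show tail4 (-((oneS : Sph 4) : EuclideanSpace ℝ (Fin 4))) = 0
      rw [tail4_neg, tail4_oneS, neg_zero]
  · intro h
    have hcoord : ∀ j : Fin 3, (v : EuclideanSpace ℝ (Fin 4)) j.succ = 0 := fun j => by
      have := congrArg (fun x => x j) h
      simpa using this
    have hnorm := norm_sph v
    rw [EuclideanSpace.norm_eq] at hnorm
    have hsum : ∑ i, ‖(v : EuclideanSpace ℝ (Fin 4)) i‖ ^ 2 = 1 := by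
      have h0 : (0:ℝ) ≤ ∑ i, ‖(v : EuclideanSpace ℝ (Fin 4)) i‖ ^ 2 :=
        Finset.sum_nonneg fun i _ => sq_nonneg _
      nlinarith [Real.sq_sqrt h0, hnorm]
    rw [Fin.sum_univ_succ] at hsum
    have hz : ∀ j : Fin 3, ‖(v : EuclideanSpace ℝ (Fin 4)) j.succ‖ ^ 2 = 0 := fun j => by
      rw [hcoord j]; simp
    rw [Finset.sum_congr rfl (fun j _ => hz j), Finset.sum_const] at hsum
    simp only [smul_zero, add_zero] at hsum
    have habs : (v : EuclideanSpace ℝ (Fin 4)) 0 = 1 ∨ (v : EuclideanSpace ℝ (Fin 4)) 0 = -1 := by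
      have : ((v : EuclideanSpace ℝ (Fin 4)) 0) ^ 2 = 1 := by
        rwa [Real.norm_eq_abs, sq_abs] at hsum
      rcases (sq_eq_sq_iff_eq_or_eq_neg (b := (1:ℝ))).mp (by rw [this, one_pow]) with h1 | h1
      · exact Or.inl h1
      · exact Or.inr h1
    refine (pr_eq_iff v oneS).mpr ?_
    rcases habs with h1 | h1
    · refine Or.inl (Subtype.ext (PiLp.ext fun i => ?_))
      refine Fin.cases ?_ (fun j => ?_) i
      · rw [h1, oneS_zero]
      · rw [hcoord j]
        exact (congrArg (fun x => x j) tail4_oneS).symm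
    · refine Or.inr (Subtype.ext (PiLp.ext fun i => ?_))
      refine Fin.cases ?_ (fun j => ?_) i
      · show (v : EuclideanSpace ℝ (Fin 4)) 0 = (-((oneS : Sph 4) : EuclideanSpace ℝ (Fin 4))) 0
        rw [h1]
        show (-1 : ℝ) = -(((oneS : Sph 4) : EuclideanSpace ℝ (Fin 4)) 0)
        rw [oneS_zero]
      · show (v : EuclideanSpace ℝ (Fin 4)) j.succ
            = (-((oneS : Sph 4) : EuclideanSpace ℝ (Fin 4))) j.succ
        rw [hcoord j]
        show (0:ℝ) = -(((oneS : Sph 4) : EuclideanSpace ℝ (Fin 4)) j.succ)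
        rw [show ((oneS : Sph 4) : EuclideanSpace ℝ (Fin 4)) j.succ = 0 from congrArg (fun x => x j) tail4_oneS,
          neg_zero]


/-! ### The punctured projective space and the retraction to `RP 2` -/

abbrev Ep := {q : RP 3 // q ≠ oneP}

abbrev T := {v : Sph 4 // tail4 (v : EuclideanSpace ℝ (Fin 4)) ≠ 0}

def mkT : T → Ep := fun v => ⟨pr 4 v.1, fun h => v.2 ((eq_one_iff v.1).mp h)⟩

lemma surjective_mkT : Function.Surjective mkT := by
  rintro ⟨q, hq⟩
  obtain ⟨v, rfl⟩ := pr_surjective 4 q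
  exact ⟨⟨v, fun h => hq ((eq_one_iff v).mpr h)⟩, Subtype.ext rfl⟩

lemma continuous_mkT : Continuous mkT :=
  Continuous.subtype_mk ((continuous_pr 4).comp continuous_subtype_val) _

lemma isOpenMap_mkT : IsOpenMap mkT := by
  intro U hU
  obtain ⟨V, hV, rfl⟩ := isOpen_induced_iff.mp hU
  have key : mkT '' (Subtype.val ⁻¹' V) = Subtype.val ⁻¹' (pr 4 '' V) := by
    ext ⟨q, hq⟩
    simp only [Set.mem_image, Set.mem_preimage]
    constructor
    · rintro ⟨⟨v, hv⟩, hvV, h⟩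
      refine ⟨v, hvV, ?_⟩
      have : (mkT ⟨v, hv⟩).1 = q := by rw [h]
      exact this
    · rintro ⟨v, hvV, h⟩
      have hv : tail4 (v : EuclideanSpace ℝ (Fin 4)) ≠ 0 := by
        intro h0
        exact hq (by rw [← h]; exact (eq_one_iff v).mpr h0)
      exact ⟨⟨v, hv⟩, hvV, Subtype.ext h⟩
  rw [key]
  exact (isOpenMap_pr 4 V hV).preimage continuous_subtype_val

lemma isOpenQuotientMap_mkT : IsOpenQuotientMap mkT :=
  ⟨surjective_mkT, continuous_mkT, isOpenMap_mkT⟩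

/-- normalized tail -/
def nt (v : Sph 4) (h : tail4 (v : EuclideanSpace ℝ (Fin 4)) ≠ 0) : Sph 3 :=
  ⟨‖tail4 (v : EuclideanSpace ℝ (Fin 4))‖⁻¹ • tail4 (v : EuclideanSpace ℝ (Fin 4)), by
    rw [mem_sphere_iff_norm, sub_zero, norm_smul, norm_inv, norm_norm,
      inv_mul_cancel₀ (norm_ne_zero_iff.mpr h)]⟩

lemma nt_negS (v : Sph 4) (h : tail4 (v : EuclideanSpace ℝ (Fin 4)) ≠ 0)
    (h' : tail4 ((negS v : Sph 4) : EuclideanSpace ℝ (Fin 4)) ≠ 0) :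
    nt (negS v) h' = negS (nt v h) := by
  apply Subtype.ext
  show ‖tail4 (-(v : EuclideanSpace ℝ (Fin 4)))‖⁻¹ • tail4 (-(v : EuclideanSpace ℝ (Fin 4)))
      = -(‖tail4 (v : EuclideanSpace ℝ (Fin 4))‖⁻¹ • tail4 (v : EuclideanSpace ℝ (Fin 4)))
  rw [tail4_neg, norm_neg, smul_neg]

def w0 : Sph 3 :=
  ⟨EuclideanSpace.single 0 1, by
    rw [mem_sphere_iff_norm, sub_zero, EuclideanSpace.norm_single, norm_one]⟩

open scoped Classical

/-- the retraction `RP 3 → RP 2` (junk value on the base point) -/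
def F : RP 3 → RP 2 :=
  Quotient.lift
    (fun v => if h : tail4 (v : EuclideanSpace ℝ (Fin 4)) ≠ 0 then pr 3 (nt v h) else pr 3 w0)
    (by
      intro a b hab
      rcases (rel_iff' a b).mp hab with rfl | rfl
      · rfl
      · have hiff : tail4 ((negS b : Sph 4) : EuclideanSpace ℝ (Fin 4)) ≠ 0
            ↔ tail4 (b : EuclideanSpace ℝ (Fin 4)) ≠ 0 := by
          rw [coe_negS, tail4_neg, neg_ne_zero]
        by_cases h : tail4 (b : EuclideanSpace ℝ (Fin 4)) ≠ 0
        · rw [dif_pos (hiff.mpr h), dif_pos h]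
          rw [nt_negS b h (hiff.mpr h)]
          exact (pr_eq_iff _ _).mpr (Or.inr rfl)
        · rw [dif_neg (fun hh => h (hiff.mp hh)), dif_neg h])

@[simp] lemma F_pr_pos (v : Sph 4) (h : tail4 (v : EuclideanSpace ℝ (Fin 4)) ≠ 0) :
    F (pr 4 v) = pr 3 (nt v h) := by
  show (if h' : tail4 (v : EuclideanSpace ℝ (Fin 4)) ≠ 0 then pr 3 (nt v h') else pr 3 w0)
      = pr 3 (nt v h)
  rw [dif_pos h]

def fE : Ep → RP 2 := fun q => F q.1

lemma continuous_fE : Continuous fE := by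
  rw [← isOpenQuotientMap_mkT.continuous_comp_iff]
  have hEq : fE ∘ mkT = fun v : T => pr 3 (nt v.1 v.2) := by
    funext v
    exact F_pr_pos v.1 v.2
  rw [hEq]
  refine (continuous_pr 3).comp (Continuous.subtype_mk ?_ _)
  have h1 : Continuous fun v : T => tail4 (v.1 : EuclideanSpace ℝ (Fin 4)) :=
    continuous_tail4.comp (continuous_subtype_val.comp continuous_subtype_val)
  exact (h1.norm.inv₀ fun v => norm_ne_zero_iff.mpr v.2).smul h1

def consS (w : Sph 3) : Sph 4 :=
  ⟨cons0 (w : EuclideanSpace ℝ (Fin 3)), by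
    rw [mem_sphere_iff_norm, sub_zero, norm_cons0]
    exact norm_sph w⟩

lemma tail4_consS (w : Sph 3) :
    tail4 ((consS w : Sph 4) : EuclideanSpace ℝ (Fin 4)) = (w : EuclideanSpace ℝ (Fin 3)) :=
  tail4_cons0 _

lemma tail4_consS_ne (w : Sph 3) :
    tail4 ((consS w : Sph 4) : EuclideanSpace ℝ (Fin 4)) ≠ 0 := by
  rw [tail4_consS]
  intro h
  have := norm_sph w
  rw [h] at this
  simp at this

def G : RP 2 → RP 3 :=
  Quotient.lift (fun w => pr 4 (consS w))
    (by
      intro a b hab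
      rcases (rel_iff' a b).mp hab with rfl | rfl
      · rfl
      · refine (pr_eq_iff _ _).mpr (Or.inr (Subtype.ext ?_))
        show cons0 (-(b : EuclideanSpace ℝ (Fin 3))) = -(cons0 (b : EuclideanSpace ℝ (Fin 3)))
        exact cons0_neg _)

@[simp] lemma G_pr (w : Sph 3) : G (pr 3 w) = pr 4 (consS w) := rfl

lemma G_ne_one (q : RP 2) : G q ≠ oneP := by
  induction q using Quotient.ind with | _ w =>
  show pr 4 (consS w) ≠ oneP
  rw [Ne, eq_one_iff]
  exact tail4_consS_ne w

def gE : RP 2 → Ep := fun q => ⟨G q, G_ne_one q⟩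

lemma continuous_G : Continuous G := by
  rw [← (isOpenQuotientMap_pr 3).continuous_comp_iff]
  show Continuous fun w : Sph 3 => G (pr 3 w)
  simp only [G_pr]
  exact (continuous_pr 4).comp
    (Continuous.subtype_mk (continuous_cons0.comp continuous_subtype_val) _)

lemma continuous_gE : Continuous gE := Continuous.subtype_mk continuous_G _

lemma fE_gE (q : RP 2) : fE (gE q) = q := by
  induction q using Quotient.ind with | _ w =>
  show fE ⟨G (pr 3 w), _⟩ = pr 3 w
  show F (pr 4 (consS w)) = pr 3 w
  rw [F_pr_pos (consS w) (tail4_consS_ne w)]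
  congr 1
  apply Subtype.ext
  show ‖tail4 ((consS w : Sph 4) : EuclideanSpace ℝ (Fin 4))‖⁻¹
      • tail4 ((consS w : Sph 4) : EuclideanSpace ℝ (Fin 4)) = (w : EuclideanSpace ℝ (Fin 3))
  rw [tail4_consS, norm_sph w, inv_one, one_smul]


/-! ### The deformation retraction -/

def cvec (t : ℝ) (x : EuclideanSpace ℝ (Fin 4)) : EuclideanSpace ℝ (Fin 4) :=
  (1 - t) • x + t • cons0 (‖tail4 x‖⁻¹ • tail4 x)

lemma tail4_cvec (t : ℝ) (x : EuclideanSpace ℝ (Fin 4)) :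
    tail4 (cvec t x) = ((1 - t) + t * ‖tail4 x‖⁻¹) • tail4 x := by
  rw [cvec, tail4_add, tail4_smul, tail4_smul, tail4_cons0, smul_smul, add_smul]

lemma coeff_pos {t : ℝ} (ht0 : 0 ≤ t) (ht1 : t ≤ 1) {x : EuclideanSpace ℝ (Fin 4)}
    (h : tail4 x ≠ 0) : 0 < (1 - t) + t * ‖tail4 x‖⁻¹ := by
  have hpos : 0 < ‖tail4 x‖⁻¹ := inv_pos.mpr (norm_pos_iff.mpr h)
  rcases lt_or_eq_of_le ht1 with h1 | rfl
  · have h2 : 0 < 1 - t := by linarith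
    have h3 : 0 ≤ t * ‖tail4 x‖⁻¹ := mul_nonneg ht0 (le_of_lt hpos)
    linarith
  · simp only [sub_self, one_mul, zero_add]
    exact hpos

lemma tail4_zero : tail4 (0 : EuclideanSpace ℝ (Fin 4)) = 0 := rfl

lemma tail4_cvec_ne {t : ℝ} (ht0 : 0 ≤ t) (ht1 : t ≤ 1) {x : EuclideanSpace ℝ (Fin 4)}
    (h : tail4 x ≠ 0) : tail4 (cvec t x) ≠ 0 := by
  rw [tail4_cvec]
  exact smul_ne_zero (ne_of_gt (coeff_pos ht0 ht1 h)) h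

lemma cvec_ne_zero {t : ℝ} (ht0 : 0 ≤ t) (ht1 : t ≤ 1) {x : EuclideanSpace ℝ (Fin 4)}
    (h : tail4 x ≠ 0) : cvec t x ≠ 0 := fun h0 =>
  tail4_cvec_ne ht0 ht1 h (by rw [h0, tail4_zero])

lemma norm_cvec_pos {t : ℝ} (ht0 : 0 ≤ t) (ht1 : t ≤ 1) {x : EuclideanSpace ℝ (Fin 4)}
    (h : tail4 x ≠ 0) : 0 < ‖cvec t x‖ :=
  norm_pos_iff.mpr (cvec_ne_zero ht0 ht1 h)

def hS (t : unitInterval) (v : Sph 4) (h : tail4 (v : EuclideanSpace ℝ (Fin 4)) ≠ 0) : Sph 4 :=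
  ⟨‖cvec t (v : EuclideanSpace ℝ (Fin 4))‖⁻¹ • cvec t (v : EuclideanSpace ℝ (Fin 4)), by
    rw [mem_sphere_iff_norm, sub_zero, norm_smul, norm_inv, norm_norm,
      inv_mul_cancel₀ (ne_of_gt (norm_cvec_pos t.2.1 t.2.2 h))]⟩

lemma tail4_hS_ne (t : unitInterval) (v : Sph 4)
    (h : tail4 (v : EuclideanSpace ℝ (Fin 4)) ≠ 0) :
    tail4 ((hS t v h : Sph 4) : EuclideanSpace ℝ (Fin 4)) ≠ 0 := by
  show tail4 (‖cvec t (v : EuclideanSpace ℝ (Fin 4))‖⁻¹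
      • cvec t (v : EuclideanSpace ℝ (Fin 4))) ≠ 0
  rw [tail4_smul]
  exact smul_ne_zero (inv_ne_zero (ne_of_gt (norm_cvec_pos t.2.1 t.2.2 h)))
    (tail4_cvec_ne t.2.1 t.2.2 h)

lemma cvec_neg (t : ℝ) (x : EuclideanSpace ℝ (Fin 4)) : cvec t (-x) = -cvec t x := by
  simp only [cvec, tail4_neg, norm_neg, smul_neg, cons0_neg, neg_add]

lemma hS_negS (t : unitInterval) (v : Sph 4) (h : tail4 (v : EuclideanSpace ℝ (Fin 4)) ≠ 0)
    (h' : tail4 ((negS v : Sph 4) : EuclideanSpace ℝ (Fin 4)) ≠ 0) :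
    hS t (negS v) h' = negS (hS t v h) := by
  apply Subtype.ext
  show ‖cvec t (-(v : EuclideanSpace ℝ (Fin 4)))‖⁻¹ • cvec t (-(v : EuclideanSpace ℝ (Fin 4)))
      = -(‖cvec t (v : EuclideanSpace ℝ (Fin 4))‖⁻¹ • cvec t (v : EuclideanSpace ℝ (Fin 4)))
  rw [cvec_neg, norm_neg, smul_neg]

lemma hS_zero (v : Sph 4) (h : tail4 (v : EuclideanSpace ℝ (Fin 4)) ≠ 0) :
    hS 0 v h = v := by
  apply Subtype.ext
  show ‖cvec ((0 : unitInterval) : ℝ) (v : EuclideanSpace ℝ (Fin 4))‖⁻¹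
      • cvec ((0 : unitInterval) : ℝ) (v : EuclideanSpace ℝ (Fin 4))
      = (v : EuclideanSpace ℝ (Fin 4))
  have hc : cvec ((0 : unitInterval) : ℝ) (v : EuclideanSpace ℝ (Fin 4))
      = (v : EuclideanSpace ℝ (Fin 4)) := by
    rw [cvec]
    simp
  rw [hc, norm_sph v, inv_one, one_smul]

lemma hS_one (v : Sph 4) (h : tail4 (v : EuclideanSpace ℝ (Fin 4)) ≠ 0) :
    hS 1 v h = consS (nt v h) := by
  apply Subtype.ext
  have hc : cvec ((1 : unitInterval) : ℝ) (v : EuclideanSpace ℝ (Fin 4))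
      = cons0 (‖tail4 (v : EuclideanSpace ℝ (Fin 4))‖⁻¹ • tail4 (v : EuclideanSpace ℝ (Fin 4))) := by
    rw [cvec]
    simp
  show ‖cvec ((1 : unitInterval) : ℝ) (v : EuclideanSpace ℝ (Fin 4))‖⁻¹
      • cvec ((1 : unitInterval) : ℝ) (v : EuclideanSpace ℝ (Fin 4))
      = cons0 (‖tail4 (v : EuclideanSpace ℝ (Fin 4))‖⁻¹ • tail4 (v : EuclideanSpace ℝ (Fin 4)))
  rw [hc, norm_cons0, norm_smul, norm_inv, norm_norm,
    inv_mul_cancel₀ (norm_ne_zero_iff.mpr h), inv_one, one_smul]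

def Hfull (t : unitInterval) : RP 3 → RP 3 :=
  Quotient.lift
    (fun v => if h : tail4 (v : EuclideanSpace ℝ (Fin 4)) ≠ 0 then pr 4 (hS t v h) else pr 4 v)
    (by
      intro a b hab
      rcases (rel_iff' a b).mp hab with rfl | rfl
      · rfl
      · have hiff : tail4 ((negS b : Sph 4) : EuclideanSpace ℝ (Fin 4)) ≠ 0
            ↔ tail4 (b : EuclideanSpace ℝ (Fin 4)) ≠ 0 := by
          rw [coe_negS, tail4_neg, neg_ne_zero]
        by_cases h : tail4 (b : EuclideanSpace ℝ (Fin 4)) ≠ 0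
        · rw [dif_pos (hiff.mpr h), dif_pos h, hS_negS t b h (hiff.mpr h)]
          exact (pr_eq_iff _ _).mpr (Or.inr rfl)
        · rw [dif_neg (fun hh => h (hiff.mp hh)), dif_neg h]
          exact (pr_eq_iff _ _).mpr (Or.inr rfl))

lemma Hfull_pr_pos (t : unitInterval) (v : Sph 4)
    (h : tail4 (v : EuclideanSpace ℝ (Fin 4)) ≠ 0) :
    Hfull t (pr 4 v) = pr 4 (hS t v h) := by
  show (if h' : tail4 (v : EuclideanSpace ℝ (Fin 4)) ≠ 0 then pr 4 (hS t v h') else pr 4 v)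
      = pr 4 (hS t v h)
  rw [dif_pos h]

lemma Hfull_ne_one (t : unitInterval) (q : RP 3) (hq : q ≠ oneP) : Hfull t q ≠ oneP := by
  obtain ⟨v, rfl⟩ := pr_surjective 4 q
  have h : tail4 (v : EuclideanSpace ℝ (Fin 4)) ≠ 0 := fun h0 => hq ((eq_one_iff v).mpr h0)
  rw [Hfull_pr_pos t v h, Ne, eq_one_iff]
  exact tail4_hS_ne t v h

def Hfn : unitInterval × Ep → Ep := fun p => ⟨Hfull p.1 p.2.1, Hfull_ne_one p.1 p.2.1 p.2.2⟩

lemma continuous_Hfn : Continuous Hfn := by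
  apply Continuous.subtype_mk
  show Continuous fun p : unitInterval × Ep => Hfull p.1 p.2.1
  rw [← (IsOpenQuotientMap.id.prodMap isOpenQuotientMap_mkT).continuous_comp_iff]
  have hEq : (fun p : unitInterval × Ep => Hfull p.1 p.2.1) ∘ Prod.map id mkT
      = fun p : unitInterval × T => pr 4 (hS p.1 p.2.1 p.2.2) := by
    funext p
    exact Hfull_pr_pos p.1 p.2.1 p.2.2
  rw [hEq]
  refine (continuous_pr 4).comp (Continuous.subtype_mk ?_ _)
  have ht : Continuous fun p : unitInterval × T => ((p.1 : ℝ)) :=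
    continuous_subtype_val.comp continuous_fst
  have hx : Continuous fun p : unitInterval × T => (p.2.1 : EuclideanSpace ℝ (Fin 4)) :=
    continuous_subtype_val.comp (continuous_subtype_val.comp continuous_snd)
  have htail : Continuous fun p : unitInterval × T =>
      tail4 (p.2.1 : EuclideanSpace ℝ (Fin 4)) := continuous_tail4.comp hx
  have hcv : Continuous fun p : unitInterval × T =>
      cvec (p.1 : ℝ) (p.2.1 : EuclideanSpace ℝ (Fin 4)) := by
    apply Continuous.add
    · exact ((continuous_const.sub ht)).smul hx
    · exact ht.smul (continuous_cons0.comp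
        (((htail.norm.inv₀ fun p => norm_ne_zero_iff.mpr p.2.2)).smul htail))
  exact (hcv.norm.inv₀ fun p =>
    ne_of_gt (norm_cvec_pos p.1.2.1 p.1.2.2 p.2.2)).smul hcv

def fEc : C(Ep, RP 2) := ⟨fE, continuous_fE⟩
def gEc : C(RP 2, Ep) := ⟨gE, continuous_gE⟩

def Hid : ContinuousMap.Homotopy (ContinuousMap.id Ep) (gEc.comp fEc) where
  toFun := Hfn
  continuous_toFun := continuous_Hfn
  map_zero_left := by
    rintro ⟨q, hq⟩
    obtain ⟨v, rfl⟩ := pr_surjective 4 q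
    apply Subtype.ext
    show Hfull 0 (pr 4 v) = pr 4 v
    have h : tail4 (v : EuclideanSpace ℝ (Fin 4)) ≠ 0 := fun h0 => hq ((eq_one_iff v).mpr h0)
    rw [Hfull_pr_pos 0 v h, hS_zero v h]
  map_one_left := by
    rintro ⟨q, hq⟩
    obtain ⟨v, rfl⟩ := pr_surjective 4 q
    apply Subtype.ext
    have h : tail4 (v : EuclideanSpace ℝ (Fin 4)) ≠ 0 := fun h0 => hq ((eq_one_iff v).mpr h0)
    show Hfull 1 (pr 4 v) = (gE (fE ⟨pr 4 v, hq⟩) : Ep).1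
    rw [Hfull_pr_pos 1 v h, hS_one v h]
    show pr 4 (consS (nt v h)) = G (F (pr 4 v))
    rw [F_pr_pos v h, G_pr]

def heE : ContinuousMap.HomotopyEquiv Ep (RP 2) where
  toFun := fEc
  invFun := gEc
  left_inv := ⟨Hid.symm⟩
  right_inv := by
    have h : fEc.comp gEc = ContinuousMap.id (RP 2) := ContinuousMap.ext fE_gE
    rw [h]

end RPWork


/-- The complement of the diagonal `(RP^3 × RP^3) \ Δ` is homotopy equivalent to the
product `RP^3 × RP^2`. -/
theorem rp3_diagonal_complement_homotopyEquiv :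
    Nonempty
      (ContinuousMap.HomotopyEquiv {p : RP 3 × RP 3 // p.1 ≠ p.2} ((RP 3) × (RP 2))) := by
  exact ⟨(RPWork.Phi.toHomotopyEquiv).trans
    ((ContinuousMap.HomotopyEquiv.refl (RP 3)).prodCongr RPWork.heE)⟩
end
end

section
/- Let C_1 and C_2 be two disjoint embedded circles in RP^3, and let K_1 = {(x,t,y) ∈ C_1 × RP^3 × C_2 : t ∈ Span(x,y)}. The projection π : K_1 → C_1 × C_2 defined by π(x,t,y) = (x,y) is a locally trivial fibration with fiber the circle: every point of C_1 × C_2 has an open neighborhood U and a homeomorphism h : π^{-1}(U) → U × S^1 such that the first coordinate of h equals π on π^{-1}(U). -/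
noncomputable section

/-- The projective line through two points of `RP^3`: the set of points represented by
nonzero vectors of the linear span of representatives. -/
def projSpan (x y : RP 3) : Set (RP 3) :=
  {t | ∃ u v w : Sph 4,
    Quotient.mk (antipodalSetoid 4) u = x ∧
    Quotient.mk (antipodalSetoid 4) v = y ∧
    Quotient.mk (antipodalSetoid 4) w = t ∧
    (w : EuclideanSpace ℝ (Fin 4)) ∈
      Submodule.span ℝ ({(u : EuclideanSpace ℝ (Fin 4)),
        (v : EuclideanSpace ℝ (Fin 4))} : Set (EuclideanSpace ℝ (Fin 4)))}


/-- The configuration space `K₁ = {(x,t,y) ∈ C₁ × RP^3 × C₂ : t ∈ Span(x,y)}` for two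
subsets `C₁, C₂ ⊆ RP^3`, as a subspace of `C₁ × RP^3 × C₂`. -/
abbrev LinkConfig (C₁ C₂ : Set (RP 3)) : Type :=
  {p : C₁ × RP 3 × C₂ // p.2.1 ∈ projSpan (p.1 : RP 3) (p.2.2 : RP 3)}

abbrev E4 := EuclideanSpace ℝ (Fin 4)
abbrev E2 := EuclideanSpace ℝ (Fin 2)

def qm : Sph 4 → RP 3 := Quotient.mk (antipodalSetoid 4)

lemma qm_cont : Continuous qm := continuous_quotient_mk'

lemma qm_surj : Function.Surjective qm := Quotient.exists_rep

lemma qm_eq_iff {a b : Sph 4} : qm a = qm b ↔ ((a : E4) = b ∨ (a : E4) = -b) :=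
  ⟨fun h => Quotient.exact h, fun h => Quotient.sound h⟩

lemma qm_neg (a : Sph 4) : qm (-a) = qm a := Quotient.sound (Or.inr (by simp))

def negS : Sph 4 ≃ₜ Sph 4 where
  toFun x := -x
  invFun x := -x
  left_inv x := by simp
  right_inv x := by simp
  continuous_toFun := by
    refine Continuous.subtype_mk ?_ _
    exact continuous_neg.comp continuous_subtype_val
  continuous_invFun := by
    refine Continuous.subtype_mk ?_ _
    exact continuous_neg.comp continuous_subtype_val

lemma qm_quot_aux {V : Set (RP 3)} (h : IsOpen (qm ⁻¹' V)) : IsOpen V := h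

lemma qm_open : IsOpenMap qm := by
  intro U hU
  have : qm ⁻¹' (qm '' U) = U ∪ (negS '' U) := by
    ext a
    simp only [Set.mem_preimage, Set.mem_image, Set.mem_union]
    constructor
    · rintro ⟨b, hb, hab⟩
      rcases qm_eq_iff.mp hab with h | h
      · left; have hba : b = a := Subtype.ext h; rwa [hba] at hb
      · right; exact ⟨b, hb, Subtype.ext (by show -(b:E4) = a; rw [h]; simp)⟩
    · rintro (h | ⟨b, hb, hb'⟩)
      · exact ⟨a, h, rfl⟩
      · refine ⟨b, hb, ?_⟩
        rw [← hb']
        show qm b = qm (-b)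
        exact (qm_neg b).symm
  have hop : IsOpen (qm ⁻¹' (qm '' U)) := by
    rw [this]; exact hU.union (negS.isOpenMap _ hU)
  exact qm_quot_aux hop

lemma qm_quot : Topology.IsQuotientMap qm := qm_open.isQuotientMap qm_cont qm_surj

-- injectivity on balls of radius 1
lemma qm_inj_ball (u₀ : Sph 4) : Set.InjOn qm (Metric.ball u₀ 1) := by
  intro a ha b hb hab
  rcases qm_eq_iff.mp hab with h | h
  · exact Subtype.ext h
  · exfalso
    have h2 : dist a b = 2 := by
      have : dist (a : E4) (b : E4) = ‖(a : E4) - b‖ := dist_eq_norm _ _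
      have hb1 : ‖(b : E4)‖ = 1 := by
        have := mem_sphere_zero_iff_norm.mp b.2; exact this
      have : dist a b = ‖(-(b:E4)) - b‖ := by
        rw [Subtype.dist_eq, dist_eq_norm, h]
      rw [this]
      have : (-(b:E4)) - b = (-2 : ℝ) • (b : E4) := by
        rw [neg_smul]; rw [two_smul]; abel
      rw [this, norm_smul]
      simp [hb1]
    have := Metric.mem_ball.mp ha
    have := Metric.mem_ball.mp hb
    have := dist_triangle a u₀ b
    rw [dist_comm a u₀] at this
    rw [dist_comm u₀ a] at this
    rw [dist_comm u₀ b] at this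
    linarith

/-! ### Local sections -/

def Vnbhd (u₀ : Sph 4) : Set (RP 3) := qm '' (Metric.ball u₀ 1)

lemma Vnbhd_open (u₀ : Sph 4) : IsOpen (Vnbhd u₀) := qm_open _ Metric.isOpen_ball

lemma mem_Vnbhd_self (u₀ : Sph 4) : qm u₀ ∈ Vnbhd u₀ :=
  ⟨u₀, Metric.mem_ball_self one_pos, rfl⟩

open Classical in
def sec (u₀ : Sph 4) (x : RP 3) : Sph 4 :=
  if h : x ∈ Vnbhd u₀ then h.choose else u₀

lemma sec_spec {u₀ : Sph 4} {x : RP 3} (h : x ∈ Vnbhd u₀) :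
    sec u₀ x ∈ Metric.ball u₀ 1 ∧ qm (sec u₀ x) = x := by
  rw [sec, dif_pos h]
  exact ⟨h.choose_spec.1, h.choose_spec.2⟩

lemma sec_cont (u₀ : Sph 4) : ContinuousOn (sec u₀) (Vnbhd u₀) := by
  rw [continuousOn_iff']
  intro t ht
  refine ⟨qm '' (t ∩ Metric.ball u₀ 1), qm_open _ (ht.inter Metric.isOpen_ball), ?_⟩
  ext x
  simp only [Set.mem_inter_iff, Set.mem_preimage, Set.mem_image]
  constructor
  · rintro ⟨hxt, hxV⟩
    exact ⟨⟨sec u₀ x, ⟨hxt, (sec_spec hxV).1⟩, (sec_spec hxV).2⟩, hxV⟩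
  · rintro ⟨⟨w, ⟨hwt, hwb⟩, hwx⟩, hxV⟩
    refine ⟨?_, hxV⟩
    have h1 := sec_spec hxV
    have : sec u₀ x = w := qm_inj_ball u₀ h1.1 hwb (h1.2.trans hwx.symm)
    rwa [this]

/-! ### Frames -/

open scoped RealInnerProductSpace

/-- The set of independent pairs on the sphere. -/
def Indep : Set (Sph 4 × Sph 4) :=
  {p | (p.2 : E4) ≠ (p.1 : E4) ∧ (p.2 : E4) ≠ -(p.1 : E4)}

abbrev IndepT := {p : Sph 4 × Sph 4 // p ∈ Indep}

lemma Indep_open : IsOpen Indep := by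
  have h1 : Continuous (fun p : Sph 4 × Sph 4 => ((p.2 : E4), (p.1 : E4))) := by
    exact (continuous_subtype_val.comp continuous_snd).prodMk
      (continuous_subtype_val.comp continuous_fst)
  have h2 : Continuous (fun p : Sph 4 × Sph 4 => ((p.2 : E4), -(p.1 : E4))) := by
    exact (continuous_subtype_val.comp continuous_snd).prodMk
      (continuous_neg.comp (continuous_subtype_val.comp continuous_fst))
  have heq : Indep = (fun p : Sph 4 × Sph 4 => ((p.2 : E4), (p.1 : E4))) ⁻¹' (Set.diagonal E4)ᶜ ∩
      (fun p : Sph 4 × Sph 4 => ((p.2 : E4), -(p.1 : E4))) ⁻¹' (Set.diagonal E4)ᶜ := by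
    ext p; simp [Indep, Set.diagonal]
  rw [heq]
  exact ((isClosed_diagonal.isOpen_compl.preimage h1).inter
    (isClosed_diagonal.isOpen_compl.preimage h2))

def fe₁ (p : IndepT) : E4 := (p.1.1 : E4)

def wv (p : IndepT) : E4 := (p.1.2 : E4) - ⟪(p.1.2 : E4), (p.1.1 : E4)⟫ • (p.1.1 : E4)

lemma wv_ne_zero (p : IndepT) : wv p ≠ 0 := by
  intro h
  have hu : ‖(p.1.1 : E4)‖ = 1 := mem_sphere_zero_iff_norm.mp p.1.1.2
  have hv : ‖(p.1.2 : E4)‖ = 1 := mem_sphere_zero_iff_norm.mp p.1.2.2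
  set c := ⟪(p.1.2 : E4), (p.1.1 : E4)⟫ with hc
  have hveq : (p.1.2 : E4) = c • (p.1.1 : E4) := by
    have := sub_eq_zero.mp h; exact this
  have : |c| = 1 := by
    have := congrArg norm hveq
    rw [norm_smul, hu, hv] at this
    simpa using this.symm
  rcases abs_eq (by norm_num : (0:ℝ) ≤ 1) |>.mp this with h1 | h1
  · exact p.2.1 (by rw [hveq, h1, one_smul])
  · exact p.2.2 (by rw [hveq, h1]; simp)

def fe₂ (p : IndepT) : E4 := ‖wv p‖⁻¹ • wv p

lemma norm_fe₁ (p : IndepT) : ‖fe₁ p‖ = 1 := mem_sphere_zero_iff_norm.mp p.1.1.2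

lemma norm_fe₂ (p : IndepT) : ‖fe₂ p‖ = 1 := by
  rw [fe₂, norm_smul]
  have := wv_ne_zero p
  have hn : ‖wv p‖ ≠ 0 := norm_ne_zero_iff.mpr this
  rw [norm_inv, norm_norm]
  field_simp

lemma inner_fe₁_fe₂ (p : IndepT) : ⟪fe₁ p, fe₂ p⟫ = 0 := by
  rw [fe₂, real_inner_smul_right, wv]
  have : ⟪fe₁ p, (p.1.2 : E4) - ⟪(p.1.2 : E4), (p.1.1 : E4)⟫ • (p.1.1 : E4)⟫ = 0 := by
    rw [inner_sub_right, real_inner_smul_right]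
    have hu : ⟪(p.1.1 : E4), (p.1.1 : E4)⟫ = 1 := by
      rw [real_inner_self_eq_norm_sq]
      have := norm_fe₁ p
      rw [fe₁] at this
      rw [this]; norm_num
    rw [fe₁, hu, real_inner_comm]
    ring
  rw [this, mul_zero]

lemma span_eq (p : IndepT) :
    Submodule.span ℝ {(p.1.1 : E4), (p.1.2 : E4)} = Submodule.span ℝ {fe₁ p, fe₂ p} := by
  apply le_antisymm
  · rw [Submodule.span_le]
    rintro z hz
    rcases hz with h | h
    · exact Submodule.subset_span (Or.inl h)
    · simp only [Set.mem_singleton_iff] at h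
      subst h
      have : (p.1.2 : E4) = ⟪(p.1.2 : E4), (p.1.1 : E4)⟫ • fe₁ p + ‖wv p‖ • fe₂ p := by
        rw [fe₂, smul_smul]
        have hn : ‖wv p‖ ≠ 0 := norm_ne_zero_iff.mpr (wv_ne_zero p)
        rw [mul_inv_cancel₀ hn, one_smul, wv, fe₁]
        abel
      rw [this]
      exact Submodule.add_mem _
        (Submodule.smul_mem _ _ (Submodule.subset_span (Or.inl rfl)))
        (Submodule.smul_mem _ _ (Submodule.subset_span (Or.inr rfl)))
  · rw [Submodule.span_le]
    rintro z hz
    rcases hz with h | h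
    · exact Submodule.subset_span (Or.inl h)
    · simp only [Set.mem_singleton_iff] at h
      subst h
      rw [fe₂, wv]
      refine Submodule.smul_mem _ _ (Submodule.sub_mem _
        (Submodule.subset_span (Or.inr rfl))
        (Submodule.smul_mem _ _ (Submodule.subset_span (Or.inl rfl))))

/-! ### Continuity of the frame maps -/

lemma cont_u : Continuous (fun p : IndepT => (p.1.1 : E4)) :=
  continuous_subtype_val.comp ((continuous_fst.comp continuous_subtype_val))

lemma cont_v : Continuous (fun p : IndepT => (p.1.2 : E4)) :=
  continuous_subtype_val.comp ((continuous_snd.comp continuous_subtype_val))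

lemma cont_fe₁ : Continuous fe₁ := cont_u

lemma cont_wv : Continuous wv :=
  cont_v.sub ((cont_v.inner (𝕜 := ℝ) cont_u).smul cont_u)

lemma cont_fe₂ : Continuous fe₂ :=
  ((cont_wv.norm).inv₀ (fun p => norm_ne_zero_iff.mpr (wv_ne_zero p))).smul cont_wv

/-! ### The doubled coordinate map -/

def mk2 (a b : ℝ) : E2 := (WithLp.equiv 2 (Fin 2 → ℝ)).symm ![a, b]

@[simp] lemma mk2_apply0 (a b : ℝ) : mk2 a b 0 = a := rfl
@[simp] lemma mk2_apply1 (a b : ℝ) : mk2 a b 1 = b := rfl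

lemma norm_mk2 {a b : ℝ} (h : a ^ 2 + b ^ 2 = 1) : ‖mk2 a b‖ = 1 := by
  rw [EuclideanSpace.norm_eq, Fin.sum_univ_two]
  simp only [mk2_apply0, mk2_apply1, Real.norm_eq_abs, sq_abs]
  rw [h]; exact Real.sqrt_one

lemma cont_mk2 {X : Type*} [TopologicalSpace X] {f g : X → ℝ}
    (hf : Continuous f) (hg : Continuous g) : Continuous (fun x => mk2 (f x) (g x)) := by
  refine (PiLp.continuous_toLp 2 (fun _ : Fin 2 => ℝ)).comp ?_
  refine continuous_pi ?_
  intro i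
  fin_cases i
  · exact hf
  · exact hg

def alph (p : IndepT) (w : E4) : ℝ := ⟪w, fe₁ p⟫
def beta (p : IndepT) (w : E4) : ℝ := ⟪w, fe₂ p⟫

def Gm (q : IndepT × Sph 4) : E2 :=
  mk2 (alph q.1 (q.2 : E4) ^ 2 - beta q.1 (q.2 : E4) ^ 2)
    (2 * alph q.1 (q.2 : E4) * beta q.1 (q.2 : E4))

lemma cont_Gm : Continuous Gm := by
  have hw : Continuous (fun q : IndepT × Sph 4 => (q.2 : E4)) :=
    continuous_subtype_val.comp continuous_snd
  have ha : Continuous (fun q : IndepT × Sph 4 => alph q.1 (q.2 : E4)) :=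
    hw.inner (cont_fe₁.comp continuous_fst)
  have hb : Continuous (fun q : IndepT × Sph 4 => beta q.1 (q.2 : E4)) :=
    hw.inner (cont_fe₂.comp continuous_fst)
  exact cont_mk2 ((ha.pow 2).sub (hb.pow 2)) ((continuous_const.mul ha).mul hb)

lemma Gm_neg (p : IndepT) (w : Sph 4) : Gm (p, -w) = Gm (p, w) := by
  have h1 : ((-w : Sph 4) : E4) = -(w : E4) := rfl
  simp only [Gm, alph, beta, h1, inner_neg_left]
  ring_nf

def Gbar (p : IndepT) (t : RP 3) : E2 :=
  Quotient.lift (fun w => Gm (p, w)) (by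
    rintro a b (h | h)
    · have : a = b := Subtype.ext h
      rw [this]
    · have : a = -b := Subtype.ext (by rw [h]; rfl)
      rw [this]
      show Gm (p, -b) = Gm (p, b)
      exact Gm_neg p b) t

@[simp] lemma Gbar_mk (p : IndepT) (w : Sph 4) : Gbar p (qm w) = Gm (p, w) := rfl

lemma cont_Gbar : Continuous (fun q : IndepT × RP 3 => Gbar q.1 q.2) := by
  have hquot : Topology.IsQuotientMap (Prod.map (id : IndepT → IndepT) qm) :=
    (IsOpenMap.id.prodMap qm_open).isQuotientMap
      (continuous_id.prodMap qm_cont)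
      (Function.surjective_id.prodMap qm_surj)
  rw [hquot.continuous_iff]
  exact cont_Gm

/-! ### The point map P -/

lemma sph2_coord (z : Sph 2) : (z : E2) 0 ^ 2 + (z : E2) 1 ^ 2 = 1 := by
  have h : ‖(z : E2)‖ = 1 := mem_sphere_zero_iff_norm.mp z.2
  rw [EuclideanSpace.norm_eq, Fin.sum_univ_two] at h
  have := congrArg (fun x : ℝ => x ^ 2) h
  simp only [Real.norm_eq_abs, sq_abs] at this
  rw [Real.sq_sqrt (by positivity)] at this
  simpa using this

lemma norm_comb (p : IndepT) {a b : ℝ} (h : a ^ 2 + b ^ 2 = 1) :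
    ‖a • fe₁ p + b • fe₂ p‖ = 1 := by
  have h2 : ‖a • fe₁ p + b • fe₂ p‖ ^ 2 = 1 := by
    rw [norm_add_sq_real, norm_smul, norm_smul, norm_fe₁, norm_fe₂,
      real_inner_smul_left, real_inner_smul_right, inner_fe₁_fe₂]
    simp only [Real.norm_eq_abs, mul_one, mul_zero]
    rw [sq_abs, sq_abs]
    linarith
  nlinarith [norm_nonneg (a • fe₁ p + b • fe₂ p)]

def Pm (p : IndepT) (z : Sph 2) : Sph 4 :=
  ⟨((z : E2) 0) • fe₁ p + ((z : E2) 1) • fe₂ p,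
    mem_sphere_zero_iff_norm.mpr (norm_comb p (sph2_coord z))⟩

lemma cont_Pm : Continuous (fun q : IndepT × Sph 2 => Pm q.1 q.2) := by
  refine Continuous.subtype_mk ?_ _
  have hz : Continuous (fun q : IndepT × Sph 2 => ((q.2 : E2))) :=
    continuous_subtype_val.comp continuous_snd
  have h0 : Continuous (fun q : IndepT × Sph 2 => ((q.2 : E2) 0)) :=
    (PiLp.continuous_apply 2 _ (0 : Fin 2)).comp hz
  have h1 : Continuous (fun q : IndepT × Sph 2 => ((q.2 : E2) 1)) :=
    (PiLp.continuous_apply 2 _ (1 : Fin 2)).comp hz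
  exact (h0.smul (cont_fe₁.comp continuous_fst)).add (h1.smul (cont_fe₂.comp continuous_fst))

/-! ### Coordinates of combinations -/

lemma inner_fe₂_fe₁ (p : IndepT) : ⟪fe₂ p, fe₁ p⟫ = 0 := by
  rw [real_inner_comm]; exact inner_fe₁_fe₂ p

lemma inner_fe₁_self (p : IndepT) : ⟪fe₁ p, fe₁ p⟫ = 1 := by
  rw [real_inner_self_eq_norm_sq, norm_fe₁]; norm_num

lemma inner_fe₂_self (p : IndepT) : ⟪fe₂ p, fe₂ p⟫ = 1 := by
  rw [real_inner_self_eq_norm_sq, norm_fe₂]; norm_num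

lemma alph_comb (p : IndepT) (a b : ℝ) : alph p (a • fe₁ p + b • fe₂ p) = a := by
  rw [alph, inner_add_left, real_inner_smul_left, real_inner_smul_left,
    inner_fe₂_fe₁, inner_fe₁_self]
  ring

lemma beta_comb (p : IndepT) (a b : ℝ) : beta p (a • fe₁ p + b • fe₂ p) = b := by
  rw [beta, inner_add_left, real_inner_smul_left, real_inner_smul_left,
    inner_fe₁_fe₂, inner_fe₂_self]
  ring

/-! ### Fiber lemmas -/

lemma span_pm {u v u' v' : Sph 4} (hu : (u' : E4) = u ∨ (u' : E4) = -(u : E4))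
    (hv : (v' : E4) = v ∨ (v' : E4) = -(v : E4)) :
    Submodule.span ℝ {(u' : E4), (v' : E4)} = Submodule.span ℝ {(u : E4), (v : E4)} := by
  apply le_antisymm
  · intro z hz
    rcases Submodule.mem_span_pair.mp hz with ⟨a, b, hab⟩
    apply Submodule.mem_span_pair.mpr
    rcases hu with h1 | h1 <;> rcases hv with h2 | h2
    · exact ⟨a, b, by rw [← hab, h1, h2]⟩
    · exact ⟨a, -b, by rw [← hab, h1, h2]; module⟩
    · exact ⟨-a, b, by rw [← hab, h1, h2]; module⟩
    · exact ⟨-a, -b, by rw [← hab, h1, h2]; module⟩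
  · intro z hz
    rcases Submodule.mem_span_pair.mp hz with ⟨a, b, hab⟩
    apply Submodule.mem_span_pair.mpr
    rcases hu with h1 | h1 <;> rcases hv with h2 | h2
    · exact ⟨a, b, by rw [← hab, h1, h2]⟩
    · exact ⟨a, -b, by rw [← hab, h1, h2]; module⟩
    · exact ⟨-a, b, by rw [← hab, h1, h2]; module⟩
    · exact ⟨-a, -b, by rw [← hab, h1, h2]; module⟩

lemma fiber_mem (p : IndepT) {t : RP 3}
    (ht : t ∈ projSpan (qm p.1.1) (qm p.1.2)) {w : Sph 4} (hw : qm w = t) :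
    (w : E4) ∈ Submodule.span ℝ {fe₁ p, fe₂ p} := by
  rcases ht with ⟨u', v', w', hu', hv', hw', hspan⟩
  have h1 : (u' : E4) = p.1.1 ∨ (u' : E4) = -(p.1.1 : E4) := qm_eq_iff.mp hu'
  have h2 : (v' : E4) = p.1.2 ∨ (v' : E4) = -(p.1.2 : E4) := qm_eq_iff.mp hv'
  have h3 : (w' : E4) = w ∨ (w' : E4) = -(w : E4) := qm_eq_iff.mp (hw'.trans hw.symm)
  rw [span_pm h1 h2, span_eq p] at hspan
  rcases h3 with h | h
  · rwa [h] at hspan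
  · have h4 : (w : E4) = -(w' : E4) := by rw [h]; simp
    rw [h4]
    exact Submodule.neg_mem _ hspan

lemma norm_comb_sq (p : IndepT) (a b : ℝ) :
    ‖a • fe₁ p + b • fe₂ p‖ ^ 2 = a ^ 2 + b ^ 2 := by
  rw [norm_add_sq_real, norm_smul, norm_smul, norm_fe₁, norm_fe₂,
    real_inner_smul_left, real_inner_smul_right, inner_fe₁_fe₂]
  simp only [Real.norm_eq_abs, mul_one, mul_zero]
  rw [sq_abs, sq_abs]
  ring

lemma coord_repr (p : IndepT) {w : Sph 4}
    (hw : (w : E4) ∈ Submodule.span ℝ {fe₁ p, fe₂ p}) :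
    (w : E4) = alph p (w : E4) • fe₁ p + beta p (w : E4) • fe₂ p ∧
      alph p (w : E4) ^ 2 + beta p (w : E4) ^ 2 = 1 := by
  rcases Submodule.mem_span_pair.mp hw with ⟨a, b, hab⟩
  have ha : alph p (w : E4) = a := by rw [← hab]; exact alph_comb p a b
  have hb : beta p (w : E4) = b := by rw [← hab]; exact beta_comb p a b
  have hn : ‖(w : E4)‖ = 1 := mem_sphere_zero_iff_norm.mp w.2
  constructor
  · rw [ha, hb, hab]
  · rw [ha, hb]
    have h2 := norm_comb_sq p a b
    rw [hab, hn] at h2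
    linarith

lemma mem_projSpan_comb (p : IndepT) {a b : ℝ} (h : a ^ 2 + b ^ 2 = 1) :
    qm ⟨a • fe₁ p + b • fe₂ p, mem_sphere_zero_iff_norm.mpr (norm_comb p h)⟩ ∈
      projSpan (qm p.1.1) (qm p.1.2) := by
  refine ⟨p.1.1, p.1.2, _, rfl, rfl, rfl, ?_⟩
  rw [show Submodule.span ℝ {(p.1.1 : E4), (p.1.2 : E4)} = Submodule.span ℝ {fe₁ p, fe₂ p}
    from span_eq p]
  exact Submodule.add_mem _
    (Submodule.smul_mem _ _ (Submodule.subset_span (Or.inl rfl)))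
    (Submodule.smul_mem _ _ (Submodule.subset_span (Or.inr rfl)))

/-! ### The squaring map on the circle -/

def sq2 (a b : ℝ) : E2 := mk2 (a ^ 2 - b ^ 2) (2 * a * b)

lemma norm_sq2 {a b : ℝ} (h : a ^ 2 + b ^ 2 = 1) : ‖sq2 a b‖ = 1 := by
  apply norm_mk2
  linear_combination (a ^ 2 + b ^ 2 + 1) * h

def sqm (z : Sph 2) : Sph 2 :=
  ⟨sq2 ((z : E2) 0) ((z : E2) 1), mem_sphere_zero_iff_norm.mpr (norm_sq2 (sph2_coord z))⟩

lemma mk2_inj {a b c d : ℝ} (h : mk2 a b = mk2 c d) : a = c ∧ b = d :=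
  ⟨congrArg (fun x : E2 => x 0) h, congrArg (fun x : E2 => x 1) h⟩

lemma E2_eta (x : E2) : mk2 (x 0) (x 1) = x := by
  ext i
  fin_cases i <;> rfl

lemma sq2_inj {a b a' b' : ℝ} (h : sq2 a b = sq2 a' b') :
    (a = a' ∧ b = b') ∨ (a = -a' ∧ b = -b') := by
  obtain ⟨e1, e2⟩ := mk2_inj h
  have key : ((a - a') ^ 2 + (b - b') ^ 2) * ((a + a') ^ 2 + (b + b') ^ 2) = 0 := by
    linear_combination (a ^ 2 - b ^ 2 - a' ^ 2 + b' ^ 2) * e1 + (2 * a * b - 2 * a' * b') * e2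
  rcases mul_eq_zero.mp key with hk | hk
  · left
    constructor
    · nlinarith [sq_nonneg (a - a'), sq_nonneg (b - b')]
    · nlinarith [sq_nonneg (a - a'), sq_nonneg (b - b')]
  · right
    constructor
    · nlinarith [sq_nonneg (a + a'), sq_nonneg (b + b')]
    · nlinarith [sq_nonneg (a + a'), sq_nonneg (b + b')]

lemma sqm_surj : Function.Surjective sqm := by
  intro z
  set c := (z : E2) 0 with hc
  set s := (z : E2) 1 with hs
  have hz : c ^ 2 + s ^ 2 = 1 := sph2_coord z
  by_cases hcn : c = -1
  · have hs0 : s = 0 := by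
      have h2 : s ^ 2 = 0 := by rw [hcn] at hz; linarith
      exact pow_eq_zero_iff (by norm_num) |>.mp h2
    refine ⟨⟨mk2 0 1, mem_sphere_zero_iff_norm.mpr (norm_mk2 (by norm_num))⟩, ?_⟩
    apply Subtype.ext
    show sq2 ((mk2 0 1) 0) ((mk2 0 1) 1) = (z : E2)
    rw [mk2_apply0, mk2_apply1, ← E2_eta (z : E2), ← hc, ← hs, hcn, hs0, sq2]
    norm_num
  · have hpos : (0:ℝ) < 1 + c := by
      rcases lt_or_eq_of_le (by nlinarith : (-1 : ℝ) ≤ c) with h | h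
      · linarith
      · exact absurd h.symm hcn
    set a := Real.sqrt ((1 + c) / 2) with ha
    have ha2 : a ^ 2 = (1 + c) / 2 := Real.sq_sqrt (by linarith)
    have hane : a ≠ 0 := by rw [ha]; positivity
    set b := s / (2 * a) with hb
    have hb2 : b ^ 2 = (1 - c) / 2 := by
      have h4 : (2 * a) ^ 2 = 2 * (1 + c) := by rw [mul_pow, ha2]; ring
      rw [hb, div_pow, h4, show s ^ 2 = (1 - c) * (1 + c) by linear_combination hz]
      rw [mul_comm (2:ℝ) (1 + c), ← div_div]
      rw [mul_div_assoc, div_self (by linarith : (1:ℝ) + c ≠ 0)]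
      ring
    have hab : a ^ 2 + b ^ 2 = 1 := by rw [ha2, hb2]; ring
    refine ⟨⟨mk2 a b, mem_sphere_zero_iff_norm.mpr (norm_mk2 hab)⟩, ?_⟩
    apply Subtype.ext
    show sq2 ((mk2 a b) 0) ((mk2 a b) 1) = (z : E2)
    rw [mk2_apply0, mk2_apply1, ← E2_eta (z : E2), ← hc, ← hs, sq2]
    have hc' : a ^ 2 - b ^ 2 = c := by rw [ha2, hb2]; ring
    have hs' : 2 * a * b = s := by rw [hb]; field_simp
    rw [hc', hs']

def halfA (z : Sph 2) : Sph 2 := (sqm_surj z).choose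

lemma sqm_halfA (z : Sph 2) : sqm (halfA z) = z := (sqm_surj z).choose_spec

/-! ### Local sections of sqm -/

def Acomp (w₀ z : Sph 2) : ℝ :=
  (w₀ : E2) 0 * (1 + (z : E2) 0) + (w₀ : E2) 1 * (z : E2) 1

def Bcomp (w₀ z : Sph 2) : ℝ :=
  (w₀ : E2) 1 * (1 - (z : E2) 0) + (w₀ : E2) 0 * (z : E2) 1

def Wgood (w₀ : Sph 2) : Set (Sph 2) := {z | 0 < Acomp w₀ z ^ 2 + Bcomp w₀ z ^ 2}

lemma cont_coord (i : Fin 2) : Continuous (fun z : Sph 2 => (z : E2) i) :=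
  (PiLp.continuous_apply 2 _ i).comp continuous_subtype_val

lemma cont_Acomp (w₀ : Sph 2) : Continuous (Acomp w₀) := by
  exact (continuous_const.mul (continuous_const.add (cont_coord 0))).add
    (continuous_const.mul (cont_coord 1))

lemma cont_Bcomp (w₀ : Sph 2) : Continuous (Bcomp w₀) := by
  exact (continuous_const.mul (continuous_const.sub (cont_coord 0))).add
    (continuous_const.mul (cont_coord 1))

lemma Wgood_open (w₀ : Sph 2) : IsOpen (Wgood w₀) :=
  isOpen_lt continuous_const (((cont_Acomp w₀).pow 2).add ((cont_Bcomp w₀).pow 2))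

lemma mem_Wgood_self (w₀ : Sph 2) : sqm w₀ ∈ Wgood w₀ := by
  have h0 := sph2_coord w₀
  set a₀ := (w₀ : E2) 0
  set b₀ := (w₀ : E2) 1
  have hA : Acomp w₀ (sqm w₀) = 2 * a₀ := by
    show a₀ * (1 + (a₀ ^ 2 - b₀ ^ 2)) + b₀ * (2 * a₀ * b₀) = 2 * a₀
    linear_combination a₀ * h0
  have hB : Bcomp w₀ (sqm w₀) = 2 * b₀ := by
    show b₀ * (1 - (a₀ ^ 2 - b₀ ^ 2)) + a₀ * (2 * a₀ * b₀) = 2 * b₀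
    linear_combination b₀ * h0
  show 0 < Acomp w₀ (sqm w₀) ^ 2 + Bcomp w₀ (sqm w₀) ^ 2
  rw [hA, hB]
  nlinarith [h0]

def sigm (w₀ : Sph 2) (z : {z : Sph 2 // z ∈ Wgood w₀}) : Sph 2 :=
  ⟨mk2 (Acomp w₀ z.1 / Real.sqrt (Acomp w₀ z.1 ^ 2 + Bcomp w₀ z.1 ^ 2))
       (Bcomp w₀ z.1 / Real.sqrt (Acomp w₀ z.1 ^ 2 + Bcomp w₀ z.1 ^ 2)),
    mem_sphere_zero_iff_norm.mpr (by
      apply norm_mk2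
      have hpos : 0 < Acomp w₀ z.1 ^ 2 + Bcomp w₀ z.1 ^ 2 := z.2
      rw [div_pow, div_pow, Real.sq_sqrt (le_of_lt hpos)]
      field_simp)⟩

lemma cont_sigm (w₀ : Sph 2) : Continuous (sigm w₀) := by
  refine Continuous.subtype_mk ?_ _
  have hA : Continuous (fun z : {z : Sph 2 // z ∈ Wgood w₀} => Acomp w₀ z.1) :=
    (cont_Acomp w₀).comp continuous_subtype_val
  have hB : Continuous (fun z : {z : Sph 2 // z ∈ Wgood w₀} => Bcomp w₀ z.1) :=
    (cont_Bcomp w₀).comp continuous_subtype_val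
  have hN : Continuous (fun z : {z : Sph 2 // z ∈ Wgood w₀} =>
      Real.sqrt (Acomp w₀ z.1 ^ 2 + Bcomp w₀ z.1 ^ 2)) :=
    ((hA.pow 2).add (hB.pow 2)).sqrt
  have hNne : ∀ z : {z : Sph 2 // z ∈ Wgood w₀},
      Real.sqrt (Acomp w₀ z.1 ^ 2 + Bcomp w₀ z.1 ^ 2) ≠ 0 :=
    fun z => ne_of_gt (Real.sqrt_pos.mpr z.2)
  exact cont_mk2 (hA.div hN hNne) (hB.div hN hNne)

lemma sqm_sigm (w₀ : Sph 2) (z : {z : Sph 2 // z ∈ Wgood w₀}) : sqm (sigm w₀ z) = z.1 := by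
  have h0 := sph2_coord w₀
  have hz := sph2_coord z.1
  set a₀ := (w₀ : E2) 0
  set b₀ := (w₀ : E2) 1
  set c := (z.1 : E2) 0 with hcdef
  set s := (z.1 : E2) 1 with hsdef
  set A := Acomp w₀ z.1 with hAdef
  set B := Bcomp w₀ z.1 with hBdef
  have hpos : 0 < A ^ 2 + B ^ 2 := z.2
  set N := Real.sqrt (A ^ 2 + B ^ 2) with hNdef
  have hN2 : N ^ 2 = A ^ 2 + B ^ 2 := Real.sq_sqrt (le_of_lt hpos)
  have hNne : N ≠ 0 := ne_of_gt (Real.sqrt_pos.mpr hpos)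
  have keyc : A ^ 2 - B ^ 2 = c * (A ^ 2 + B ^ 2) := by
    rw [hAdef, hBdef]
    show (a₀ * (1 + c) + b₀ * s) ^ 2 - (b₀ * (1 - c) + a₀ * s) ^ 2 =
      c * ((a₀ * (1 + c) + b₀ * s) ^ 2 + (b₀ * (1 - c) + a₀ * s) ^ 2)
    linear_combination (-(a₀ ^ 2 - b₀ ^ 2) - c * (a₀ ^ 2 + b₀ ^ 2)) * hz
  have keys : 2 * A * B = s * (A ^ 2 + B ^ 2) := by
    rw [hAdef, hBdef]
    show 2 * (a₀ * (1 + c) + b₀ * s) * (b₀ * (1 - c) + a₀ * s) =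
      s * ((a₀ * (1 + c) + b₀ * s) ^ 2 + (b₀ * (1 - c) + a₀ * s) ^ 2)
    linear_combination (-(2 * a₀ * b₀) - s * (a₀ ^ 2 + b₀ ^ 2)) * hz
  apply Subtype.ext
  show sq2 (A / N) (B / N) = (z.1 : E2)
  rw [← E2_eta ((z.1 : Sph 2) : E2), sq2]
  have h1 : (A / N) ^ 2 - (B / N) ^ 2 = c := by
    rw [div_pow, div_pow, hN2, div_sub_div_same, keyc, mul_div_assoc,
      div_self (ne_of_gt hpos), mul_one]
  have h2 : 2 * (A / N) * (B / N) = s := by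
    have e : 2 * (A / N) * (B / N) = 2 * A * B / N ^ 2 := by ring
    rw [e, hN2, keys, mul_div_assoc, div_self (ne_of_gt hpos), mul_one]
  rw [h1, h2]

/-! ### Pm and Gbar lemmas -/

lemma Pm_coord (p : IndepT) (z : Sph 2) :
    (Pm p z : E4) = ((z : E2) 0) • fe₁ p + ((z : E2) 1) • fe₂ p := rfl

lemma Gbar_Pm (p : IndepT) (z : Sph 2) : Gbar p (qm (Pm p z)) = (sqm z : E2) := by
  rw [Gbar_mk]
  have ha : alph p (Pm p z : E4) = (z : E2) 0 := by rw [Pm_coord]; exact alph_comb p _ _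
  have hb : beta p (Pm p z : E4) = (z : E2) 1 := by rw [Pm_coord]; exact beta_comb p _ _
  show mk2 (alph p (Pm p z : E4) ^ 2 - beta p (Pm p z : E4) ^ 2)
      (2 * alph p (Pm p z : E4) * beta p (Pm p z : E4)) = _
  rw [ha, hb]
  rfl

lemma qm_Pm_congr (p : IndepT) {z z' : Sph 2} (h : (sqm z : E2) = (sqm z' : E2)) :
    qm (Pm p z) = qm (Pm p z') := by
  have h' : sq2 ((z : E2) 0) ((z : E2) 1) = sq2 ((z' : E2) 0) ((z' : E2) 1) := h
  rcases sq2_inj h' with ⟨h0, h1⟩ | ⟨h0, h1⟩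
  · have he : Pm p z = Pm p z' := Subtype.ext (by rw [Pm_coord, Pm_coord, h0, h1])
    rw [he]
  · refine qm_eq_iff.mpr (Or.inr ?_)
    rw [Pm_coord, Pm_coord, h0, h1]
    module

lemma qm_Pm_half (p : IndepT) {t : RP 3} (ht : t ∈ projSpan (qm p.1.1) (qm p.1.2))
    {z : Sph 2} (hz : ((sqm z : Sph 2) : E2) = Gbar p t) : qm (Pm p z) = t := by
  obtain ⟨w, hw⟩ := qm_surj t
  obtain ⟨hrep, hnorm⟩ := coord_repr p (fiber_mem p ht hw)
  have hz' : sq2 ((z : E2) 0) ((z : E2) 1) = sq2 (alph p (w : E4)) (beta p (w : E4)) := by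
    rw [← hw, Gbar_mk] at hz
    exact hz
  rcases sq2_inj hz' with ⟨h0, h1⟩ | ⟨h0, h1⟩
  · have he : Pm p z = w := Subtype.ext (by rw [Pm_coord, h0, h1, ← hrep])
    rw [he, hw]
  · rw [← hw]
    refine qm_eq_iff.mpr (Or.inr ?_)
    rw [Pm_coord, h0, h1]
    conv_rhs => rw [hrep]
    module

lemma Gbar_norm (p : IndepT) {t : RP 3} (ht : t ∈ projSpan (qm p.1.1) (qm p.1.2)) :
    ‖Gbar p t‖ = 1 := by
  obtain ⟨w, hw⟩ := qm_surj t
  rw [← hw, Gbar_mk]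
  exact norm_sq2 (coord_repr p (fiber_mem p ht hw)).2

/-! ### Main construction -/


section Main

variable (C₁ C₂ : Set (RP 3)) (u₀ v₀ : Sph 4)

def Uset : Set (↥C₁ × ↥C₂) := {p | (p.1 : RP 3) ∈ Vnbhd u₀ ∧ (p.2 : RP 3) ∈ Vnbhd v₀}

lemma Uset_open : IsOpen (Uset C₁ C₂ u₀ v₀) := by
  have h1 : Continuous (fun p : ↥C₁ × ↥C₂ => (p.1 : RP 3)) :=
    continuous_subtype_val.comp continuous_fst
  have h2 : Continuous (fun p : ↥C₁ × ↥C₂ => (p.2 : RP 3)) :=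
    continuous_subtype_val.comp continuous_snd
  exact ((Vnbhd_open u₀).preimage h1).inter ((Vnbhd_open v₀).preimage h2)

variable (hd : ∀ (x : ↥C₁) (y : ↥C₂), (x : RP 3) ≠ (y : RP 3))

def om (q : ↥(Uset C₁ C₂ u₀ v₀)) : IndepT :=
  ⟨(sec u₀ ↑q.1.1, sec v₀ ↑q.1.2), by
    have h1 : qm (sec u₀ ↑q.1.1) = ↑q.1.1 := (sec_spec q.2.1).2
    have h2 : qm (sec v₀ ↑q.1.2) = ↑q.1.2 := (sec_spec q.2.2).2
    have hne : (↑q.1.1 : RP 3) ≠ (↑q.1.2 : RP 3) := hd q.1.1 q.1.2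
    constructor
    · intro h
      apply hne
      rw [← h1, ← h2]
      exact (congrArg qm (Subtype.ext h)).symm
    · intro h
      apply hne
      rw [← h1, ← h2]
      exact (qm_eq_iff.mpr (Or.inr h)).symm⟩

lemma om_spec1 (q : ↥(Uset C₁ C₂ u₀ v₀)) :
    qm (om C₁ C₂ u₀ v₀ hd q).1.1 = ↑q.1.1 := (sec_spec q.2.1).2

lemma om_spec2 (q : ↥(Uset C₁ C₂ u₀ v₀)) :
    qm (om C₁ C₂ u₀ v₀ hd q).1.2 = ↑q.1.2 := (sec_spec q.2.2).2

lemma om_cont : Continuous (om C₁ C₂ u₀ v₀ hd) := by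
  refine Continuous.subtype_mk (Continuous.prodMk ?_ ?_) _
  · refine ContinuousOn.comp_continuous (sec_cont u₀) ?_ (fun q => q.2.1)
    exact continuous_subtype_val.comp (continuous_fst.comp continuous_subtype_val)
  · refine ContinuousOn.comp_continuous (sec_cont v₀) ?_ (fun q => q.2.2)
    exact continuous_subtype_val.comp (continuous_snd.comp continuous_subtype_val)

abbrev DKt := {k : LinkConfig C₁ C₂ // (k.1.1, k.1.2.2) ∈ Uset C₁ C₂ u₀ v₀}

def piK (k : DKt C₁ C₂ u₀ v₀) : ↥(Uset C₁ C₂ u₀ v₀) := ⟨(k.1.1.1, k.1.1.2.2), k.2⟩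

lemma piK_cont : Continuous (piK C₁ C₂ u₀ v₀) := by
  refine Continuous.subtype_mk (Continuous.prodMk ?_ ?_) _
  · exact continuous_fst.comp (continuous_subtype_val.comp continuous_subtype_val)
  · exact (continuous_snd.comp continuous_snd).comp
      (continuous_subtype_val.comp continuous_subtype_val)

def tK (k : DKt C₁ C₂ u₀ v₀) : RP 3 := k.1.1.2.1

lemma tK_cont : Continuous (tK C₁ C₂ u₀ v₀) :=
  (continuous_fst.comp continuous_snd).comp (continuous_subtype_val.comp continuous_subtype_val)

lemma ht' (q : ↥(Uset C₁ C₂ u₀ v₀)) {t : RP 3} (ht : t ∈ projSpan ↑q.1.1 ↑q.1.2) :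
    t ∈ projSpan (qm (om C₁ C₂ u₀ v₀ hd q).1.1) (qm (om C₁ C₂ u₀ v₀ hd q).1.2) := by
  rw [om_spec1, om_spec2]; exact ht

lemma Pm_mem_fiber (q : ↥(Uset C₁ C₂ u₀ v₀)) (z : Sph 2) :
    qm (Pm (om C₁ C₂ u₀ v₀ hd q) z) ∈ projSpan ↑q.1.1 ↑q.1.2 := by
  have h := mem_projSpan_comb (om C₁ C₂ u₀ v₀ hd q) (sph2_coord z)
  rw [om_spec1, om_spec2] at h
  exact h

def hfun (k : DKt C₁ C₂ u₀ v₀) : ↥(Uset C₁ C₂ u₀ v₀) × Sph 2 :=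
  (piK C₁ C₂ u₀ v₀ k,
    ⟨Gbar (om C₁ C₂ u₀ v₀ hd (piK C₁ C₂ u₀ v₀ k)) (tK C₁ C₂ u₀ v₀ k),
      mem_sphere_zero_iff_norm.mpr
        (Gbar_norm _ (ht' C₁ C₂ u₀ v₀ hd _ k.1.2))⟩)

lemma hfun_cont : Continuous (hfun C₁ C₂ u₀ v₀ hd) := by
  have h1 : Continuous (fun k : DKt C₁ C₂ u₀ v₀ =>
      ((om C₁ C₂ u₀ v₀ hd (piK C₁ C₂ u₀ v₀ k)), tK C₁ C₂ u₀ v₀ k)) :=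
    ((om_cont C₁ C₂ u₀ v₀ hd).comp (piK_cont C₁ C₂ u₀ v₀)).prodMk (tK_cont C₁ C₂ u₀ v₀)
  have h2 : Continuous ((fun q : IndepT × RP 3 => Gbar q.1 q.2) ∘
      (fun k : DKt C₁ C₂ u₀ v₀ =>
        ((om C₁ C₂ u₀ v₀ hd (piK C₁ C₂ u₀ v₀ k)), tK C₁ C₂ u₀ v₀ k))) := cont_Gbar.comp h1
  exact Continuous.prodMk (piK_cont C₁ C₂ u₀ v₀) (Continuous.subtype_mk h2 _)

def gfun (q : ↥(Uset C₁ C₂ u₀ v₀) × Sph 2) : DKt C₁ C₂ u₀ v₀ :=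
  ⟨⟨(q.1.1.1, qm (Pm (om C₁ C₂ u₀ v₀ hd q.1) (halfA q.2)), q.1.1.2),
    Pm_mem_fiber C₁ C₂ u₀ v₀ hd q.1 (halfA q.2)⟩, q.1.2⟩

lemma gfun_cont : Continuous (gfun C₁ C₂ u₀ v₀ hd) := by
  rw [continuous_iff_continuousAt]
  intro q₀
  set w₀ := halfA q₀.2 with hw₀
  set O : Set (↥(Uset C₁ C₂ u₀ v₀) × Sph 2) := {q | q.2 ∈ Wgood w₀} with hO
  have hOopen : IsOpen O := (Wgood_open w₀).preimage continuous_snd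
  have hq₀ : q₀ ∈ O := by
    show q₀.2 ∈ Wgood w₀
    have h := mem_Wgood_self w₀
    rwa [hw₀, sqm_halfA q₀.2] at h
  refine ContinuousOn.continuousAt ?_ (hOopen.mem_nhds hq₀)
  rw [continuousOn_iff_continuous_restrict]
  have Fcont : Continuous (fun r : ↥O =>
      (⟨⟨(r.1.1.1.1, qm (Pm (om C₁ C₂ u₀ v₀ hd r.1.1) (sigm w₀ ⟨r.1.2, r.2⟩)), r.1.1.1.2),
        Pm_mem_fiber C₁ C₂ u₀ v₀ hd r.1.1 _⟩, r.1.1.2⟩ : DKt C₁ C₂ u₀ v₀)) := by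
    have hr1 : Continuous (fun r : ↥O => r.1.1) := continuous_fst.comp continuous_subtype_val
    have hA : Continuous (fun r : ↥O =>
        ((om C₁ C₂ u₀ v₀ hd r.1.1), sigm w₀ ⟨r.1.2, r.2⟩)) := by
      refine Continuous.prodMk ?_ ?_
      · exact (om_cont C₁ C₂ u₀ v₀ hd).comp hr1
      · exact (cont_sigm w₀).comp
          (Continuous.subtype_mk (continuous_snd.comp continuous_subtype_val) _)
    have hB : Continuous ((fun q : IndepT × Sph 2 => Pm q.1 q.2) ∘ (fun r : ↥O =>
        ((om C₁ C₂ u₀ v₀ hd r.1.1), sigm w₀ ⟨r.1.2, r.2⟩))) := cont_Pm.comp hA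
    have hmid : Continuous (fun r : ↥O =>
        qm (Pm (om C₁ C₂ u₀ v₀ hd r.1.1) (sigm w₀ ⟨r.1.2, r.2⟩))) := qm_cont.comp hB
    refine Continuous.subtype_mk (Continuous.subtype_mk ?_ _) _
    exact (continuous_fst.comp (continuous_subtype_val.comp hr1)).prodMk
      (hmid.prodMk (continuous_snd.comp (continuous_subtype_val.comp hr1)))
  refine Fcont.congr ?_
  intro r
  apply Subtype.ext
  apply Subtype.ext
  have hmid : qm (Pm (om C₁ C₂ u₀ v₀ hd r.1.1) (sigm w₀ ⟨r.1.2, r.2⟩)) =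
      qm (Pm (om C₁ C₂ u₀ v₀ hd r.1.1) (halfA r.1.2)) := by
    apply qm_Pm_congr
    rw [sqm_sigm w₀ ⟨r.1.2, r.2⟩, sqm_halfA r.1.2]
  exact congrArg (fun m => (((r.1.1 : ↥C₁ × ↥C₂)).1, m, ((r.1.1 : ↥C₁ × ↥C₂)).2)) hmid

lemma left_inv' (k : DKt C₁ C₂ u₀ v₀) :
    gfun C₁ C₂ u₀ v₀ hd (hfun C₁ C₂ u₀ v₀ hd k) = k := by
  apply Subtype.ext
  apply Subtype.ext
  have hmid : qm (Pm (om C₁ C₂ u₀ v₀ hd (hfun C₁ C₂ u₀ v₀ hd k).1)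
      (halfA (hfun C₁ C₂ u₀ v₀ hd k).2)) = tK C₁ C₂ u₀ v₀ k := by
    apply qm_Pm_half _ (ht' C₁ C₂ u₀ v₀ hd _ k.1.2)
    exact congrArg Subtype.val (sqm_halfA (hfun C₁ C₂ u₀ v₀ hd k).2)
  exact congrArg (fun m => ((k.1.1.1, m, k.1.1.2.2) : ↥C₁ × RP 3 × ↥C₂)) hmid

lemma right_inv' (q : ↥(Uset C₁ C₂ u₀ v₀) × Sph 2) :
    hfun C₁ C₂ u₀ v₀ hd (gfun C₁ C₂ u₀ v₀ hd q) = q := by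
  have h1 : (hfun C₁ C₂ u₀ v₀ hd (gfun C₁ C₂ u₀ v₀ hd q)).1 = q.1 := rfl
  have h2 : (hfun C₁ C₂ u₀ v₀ hd (gfun C₁ C₂ u₀ v₀ hd q)).2 = q.2 := by
    apply Subtype.ext
    show Gbar (om C₁ C₂ u₀ v₀ hd q.1) (qm (Pm (om C₁ C₂ u₀ v₀ hd q.1) (halfA q.2))) = ↑q.2
    rw [Gbar_Pm]
    exact congrArg Subtype.val (sqm_halfA q.2)
  exact Prod.ext_iff.mpr ⟨h1, h2⟩

def hHomeo : DKt C₁ C₂ u₀ v₀ ≃ₜ ↥(Uset C₁ C₂ u₀ v₀) × Sph 2 where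
  toFun := hfun C₁ C₂ u₀ v₀ hd
  invFun := gfun C₁ C₂ u₀ v₀ hd
  left_inv := left_inv' C₁ C₂ u₀ v₀ hd
  right_inv := right_inv' C₁ C₂ u₀ v₀ hd
  continuous_toFun := hfun_cont C₁ C₂ u₀ v₀ hd
  continuous_invFun := gfun_cont C₁ C₂ u₀ v₀ hd

end Main


/-- For disjoint embedded circles `C₁, C₂ ⊆ RP^3`, the projection
`π : K₁ → C₁ × C₂, (x,t,y) ↦ (x,y)` is a locally trivial fibration with fiber the
circle `S¹`: every point of the base has an open neighborhood `U` together with a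
homeomorphism `π⁻¹(U) ≃ U × S¹` whose first coordinate is `π`. -/
theorem linkConfig_proj_locally_trivial (γ₁ γ₂ : C(Sph 2, RP 3))
    (hγ₁ : Function.Injective γ₁) (hγ₂ : Function.Injective γ₂)
    (hdisj : Disjoint (Set.range γ₁) (Set.range γ₂)) :
    ∀ b : (Set.range γ₁) × (Set.range γ₂),
      ∃ U : Set ((Set.range γ₁) × (Set.range γ₂)), IsOpen U ∧ b ∈ U ∧
        ∃ h : {k : LinkConfig (Set.range γ₁) (Set.range γ₂) //
                (k.1.1, k.1.2.2) ∈ U} ≃ₜ U × Sph 2,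
          ∀ k, ((h k).1 : (Set.range γ₁) × (Set.range γ₂)) = (k.1.1.1, k.1.1.2.2) := by
  intro b
  obtain ⟨u₀, hu₀⟩ := qm_surj (↑b.1 : RP 3)
  obtain ⟨v₀, hv₀⟩ := qm_surj (↑b.2 : RP 3)
  have hd : ∀ (x : ↥(Set.range γ₁)) (y : ↥(Set.range γ₂)), (x : RP 3) ≠ (y : RP 3) := by
    intro x y h
    exact Set.disjoint_left.mp hdisj x.2 (h ▸ y.2)
  refine ⟨Uset (Set.range γ₁) (Set.range γ₂) u₀ v₀,
    Uset_open _ _ u₀ v₀,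
    ⟨by rw [← hu₀]; exact mem_Vnbhd_self u₀, by rw [← hv₀]; exact mem_Vnbhd_self v₀⟩,
    hHomeo _ _ u₀ v₀ hd, fun k => rfl⟩
end
end
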